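/- arXiv:1902.05298 — 7 statements merged into one kernel-verified Lean document; each statement's English description precedes it below -/
import Mathlib

section
/- Let N_A, N_D be nilpotent n×n complex matrices. If P₊ (N_A ⊗ 𝟙 + 𝟙 ⊗ N_D) = 0, where P₊ is the orthogonal projection onto the symmetric subspace of ℂⁿ ⊗ ℂⁿ, then N_A ⊗ 𝟙 + 𝟙 ⊗ N_D = 0 (equivalently N_A = 0 and N_D = 0). -/
open Matrix Kronecker

/-- The flip (swap) operator on `ℂⁿ ⊗ ℂⁿ`, as a matrix. -/
def swapMat (n : ℕ) : Matrix (Fin n × Fin n) (Fin n × Fin n) ℂ :=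
  Matrix.of fun p q => if p.1 = q.2 ∧ p.2 = q.1 then 1 else 0

/-- The orthogonal projection onto the symmetric subspace of `ℂⁿ ⊗ ℂⁿ`. -/
noncomputable def symProj (n : ℕ) : Matrix (Fin n × Fin n) (Fin n × Fin n) ℂ :=
  (2 : ℂ)⁻¹ • (1 + swapMat n)

lemma swapMat_mul_apply {n : ℕ} (M : Matrix (Fin n × Fin n) (Fin n × Fin n) ℂ)
    (p q : Fin n × Fin n) : (swapMat n * M) p q = M (p.2, p.1) q := by
  rw [Matrix.mul_apply, Finset.sum_eq_single (p.2, p.1)]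
  · simp [swapMat]
  · intro r _ hr
    have : ¬ (p.1 = r.2 ∧ p.2 = r.1) := by
      rintro ⟨h1, h2⟩; exact hr (Prod.ext h2.symm h1.symm)
    simp [swapMat, this]
  · simp

/-- A diagonal nilpotent matrix over ℂ is zero on the diagonal. -/
lemma diag_nilpotent_eq_zero {n : ℕ} (d : Fin n → ℂ)
    (h : IsNilpotent (Matrix.diagonal d)) : d = 0 := by
  obtain ⟨s, hs⟩ := h
  rw [Matrix.diagonal_pow] at hs
  funext i
  have h1 : d i ^ s = 0 := by
    have := congrFun (congrFun hs i) i
    simpa [Matrix.diagonal_apply_eq] using this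
  have : IsNilpotent (d i) := ⟨s, h1⟩
  simpa using this.eq_zero

/-- If `N_A`, `N_D` are nilpotent and `P₊ (N_A ⊗ 𝟙 + 𝟙 ⊗ N_D) = 0`, then
`N_A ⊗ 𝟙 + 𝟙 ⊗ N_D = 0`, equivalently `N_A = 0` and `N_D = 0`. -/
theorem nilpotent_tensor_sum_eq_zero_of_symProj_eq_zero
    (n : ℕ) (NA ND : Matrix (Fin n) (Fin n) ℂ)
    (hNA : IsNilpotent NA) (hND : IsNilpotent ND)
    (h : symProj n * (NA ⊗ₖ (1 : Matrix (Fin n) (Fin n) ℂ)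
        + (1 : Matrix (Fin n) (Fin n) ℂ) ⊗ₖ ND) = 0) :
    NA ⊗ₖ (1 : Matrix (Fin n) (Fin n) ℂ) + (1 : Matrix (Fin n) (Fin n) ℂ) ⊗ₖ ND = 0
      ∧ NA = 0 ∧ ND = 0 := by
  set M := NA ⊗ₖ (1 : Matrix (Fin n) (Fin n) ℂ)
      + (1 : Matrix (Fin n) (Fin n) ℂ) ⊗ₖ ND with hMdef
  have key : ∀ p q : Fin n × Fin n, M p q + M (p.2, p.1) q = 0 := by
    intro p q
    have h0 := congrFun (congrFun h p) q
    simp only [symProj, Matrix.smul_mul, Matrix.add_mul, Matrix.one_mul,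
      Matrix.smul_apply, Matrix.add_apply, swapMat_mul_apply, Matrix.zero_apply,
      smul_eq_mul] at h0
    have h2 : (2 : ℂ)⁻¹ ≠ 0 := by norm_num
    have := mul_eq_zero.mp h0
    tauto
  have Mapp : ∀ i j k l : Fin n, M (i, j) (k, l)
      = NA i k * (if j = l then 1 else 0) + (if i = k then 1 else 0) * ND j l := by
    intro i j k l
    simp [hMdef, Matrix.one_apply]
  have hA : ∀ i k : Fin n, NA i k + (if i = k then ND i i else 0) = 0 := by
    intro i k
    have := key (i, i) (k, i)
    rw [Mapp] at this
    simp only [if_pos rfl, mul_one] at this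
    have h2 : (NA i k + (if i = k then ND i i else 0)) * 2 = 0 := by
      ring_nf
      ring_nf at this
      split_ifs with hik <;> split_ifs at this <;> linear_combination this
    rcases mul_eq_zero.mp h2 with h' | h'
    · exact h'
    · norm_num at h'
  have hD : ∀ j l : Fin n, ND j l + (if j = l then NA j j else 0) = 0 := by
    intro j l
    have := key (j, j) (j, l)
    rw [Mapp] at this
    simp only [if_pos rfl, one_mul] at this
    have h2 : (ND j l + (if j = l then NA j j else 0)) * 2 = 0 := by
      ring_nf
      ring_nf at this
      split_ifs with hjl <;> split_ifs at this <;> linear_combination this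
    rcases mul_eq_zero.mp h2 with h' | h'
    · exact h'
    · norm_num at h'
  have hNAdiag : NA = Matrix.diagonal (fun i => NA i i) := by
    ext i k
    rcases eq_or_ne i k with rfl | hik
    · simp
    · have := hA i k
      rw [if_neg hik, add_zero] at this
      simp [Matrix.diagonal_apply_ne _ hik, this]
  have hd : (fun i => NA i i) = 0 := by
    apply diag_nilpotent_eq_zero
    rwa [← hNAdiag]
  have hNA0 : NA = 0 := by
    rw [hNAdiag, hd]; exact Matrix.diagonal_zero
  have hND0 : ND = 0 := by
    ext j l
    have h1 := hD j l
    have h2 : NA j j = 0 := congrFun hd j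
    rw [h2] at h1
    simpa using h1
  refine ⟨?_, hNA0, hND0⟩
  rw [hMdef, hNA0, hND0]
  simp
end

section
/- Let A, D be n×n complex matrices such that P₊ (Aᵀ ⊗ 𝟙 + 𝟙 ⊗ Dᵀ) = 0, where P₊ projects onto the symmetric subspace of ℂⁿ ⊗ ℂⁿ. Then for any eigenvalue λ of Aᵀ and any eigenvalue ω of Dᵀ, we have λ + ω = 0. In particular, Aᵀ and Dᵀ each have a single eigenvalue, λ and −λ respectively. -/
open Matrix Kronecker

/-- From membership in the spectrum of a matrix, extract an eigenvector. -/
lemma exists_eigvec {n : ℕ} (M : Matrix (Fin n) (Fin n) ℂ) {μ : ℂ}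
    (hμ : μ ∈ spectrum ℂ M) : ∃ v : Fin n → ℂ, v ≠ 0 ∧ M.mulVec v = μ • v := by
  rw [spectrum.mem_iff, Matrix.isUnit_iff_isUnit_det, isUnit_iff_ne_zero, not_not,
    ← Matrix.exists_mulVec_eq_zero_iff] at hμ
  obtain ⟨v, hv, hv0⟩ := hμ
  rw [sub_mulVec, sub_eq_zero, Algebra.algebraMap_eq_smul_one, smul_mulVec,
    one_mulVec] at hv0
  exact ⟨v, hv, hv0.symm⟩

lemma kron_mulVec {n : ℕ} (M N : Matrix (Fin n) (Fin n) ℂ) (v w : Fin n → ℂ) :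
    (M ⊗ₖ N).mulVec (fun p => v p.1 * w p.2)
      = fun p => (M.mulVec v p.1) * (N.mulVec w p.2) := by
  funext p
  simp only [mulVec, dotProduct, kroneckerMap_apply, Fintype.sum_prod_type, Finset.mul_sum,
    Finset.sum_mul]
  rw [Finset.sum_comm]
  refine Finset.sum_congr rfl fun k _ => Finset.sum_congr rfl fun l _ => by ring

lemma swap_mulVec {n : ℕ} (x : Fin n × Fin n → ℂ) (p : Fin n × Fin n) :
    (swapMat n).mulVec x p = x (p.2, p.1) := by
  simp only [swapMat, mulVec, dotProduct, of_apply, ite_mul, one_mul, zero_mul,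
    Fintype.sum_prod_type]
  rw [Finset.sum_eq_single p.2]
  · rw [Finset.sum_eq_single p.1] <;> simp +contextual [eq_comm]
  · intro b _ hb
    apply Finset.sum_eq_zero
    simp +contextual [Ne.symm hb, eq_comm]
  · simp

lemma anti_of_symProj {n : ℕ} (A D : Matrix (Fin n) (Fin n) ℂ)
    (h : symProj n * (Aᵀ ⊗ₖ (1 : Matrix (Fin n) (Fin n) ℂ)
        + (1 : Matrix (Fin n) (Fin n) ℂ) ⊗ₖ Dᵀ) = 0)
    {μ ω : ℂ} (hμ : μ ∈ spectrum ℂ Aᵀ) (hω : ω ∈ spectrum ℂ Dᵀ) : μ + ω = 0 := by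
  obtain ⟨v, hv, hAv⟩ := exists_eigvec Aᵀ hμ
  obtain ⟨w, hw, hDw⟩ := exists_eigvec Dᵀ hω
  set t : Fin n × Fin n → ℂ := fun p => v p.1 * w p.2 with ht
  have hK : (Aᵀ ⊗ₖ (1 : Matrix (Fin n) (Fin n) ℂ)
      + (1 : Matrix (Fin n) (Fin n) ℂ) ⊗ₖ Dᵀ).mulVec t = fun p => (μ + ω) * t p := by
    rw [add_mulVec, ht, kron_mulVec, kron_mulVec, hAv, hDw]
    funext p
    simp only [one_mulVec, Pi.add_apply, Pi.smul_apply, smul_eq_mul]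
    ring
  have h0 : (symProj n).mulVec ((Aᵀ ⊗ₖ (1 : Matrix (Fin n) (Fin n) ℂ)
      + (1 : Matrix (Fin n) (Fin n) ℂ) ⊗ₖ Dᵀ).mulVec t) = 0 := by
    rw [mulVec_mulVec, h, zero_mulVec]
  rw [hK] at h0
  have h1 : ∀ p : Fin n × Fin n, (μ + ω) * (t p + t (p.2, p.1)) = 0 := by
    intro p
    have := congrFun h0 p
    rw [symProj, smul_mulVec, add_mulVec, one_mulVec] at this
    simp only [Pi.smul_apply, Pi.add_apply, swap_mulVec, smul_eq_mul, Pi.zero_apply] at this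
    have h2 : ((2 : ℂ)⁻¹ : ℂ) ≠ 0 := by norm_num
    field_simp at this
    linear_combination this
  by_contra hμω
  have hsym : ∀ i j : Fin n, v i * w j + v j * w i = 0 := by
    intro i j
    have := h1 (i, j)
    simp only [ht] at this
    exact (mul_eq_zero.mp this).resolve_left hμω
  obtain ⟨i, hi⟩ := Function.ne_iff.mp hv
  obtain ⟨j, hj⟩ := Function.ne_iff.mp hw
  simp only [Pi.zero_apply] at hi hj
  have hwi : w i = 0 := by
    have := hsym i i
    have : (2 : ℂ) * (v i * w i) = 0 := by linear_combination this
    simpa [hi] using this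
  have hvj : v j = 0 := by
    have := hsym j j
    have : (2 : ℂ) * (v j * w j) = 0 := by linear_combination this
    simpa [hj] using this
  have := hsym i j
  rw [hvj, hwi] at this
  simp only [zero_mul, mul_zero, add_zero] at this
  exact (mul_ne_zero hi hj) this

/-- If `P₊ (Aᵀ ⊗ 𝟙 + 𝟙 ⊗ Dᵀ) = 0`, then every eigenvalue `μ` of `Aᵀ` and every eigenvalue
`ω` of `Dᵀ` satisfy `μ + ω = 0`; in particular `Aᵀ` has a single eigenvalue `l` and `Dᵀ`
has the single eigenvalue `-l`. -/
theorem spectrum_anti_of_symProj_eq_zero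
    (n : ℕ) (hn : 0 < n) (A D : Matrix (Fin n) (Fin n) ℂ)
    (h : symProj n * (Aᵀ ⊗ₖ (1 : Matrix (Fin n) (Fin n) ℂ)
        + (1 : Matrix (Fin n) (Fin n) ℂ) ⊗ₖ Dᵀ) = 0) :
    (∀ μ ∈ spectrum ℂ Aᵀ, ∀ ω ∈ spectrum ℂ Dᵀ, μ + ω = 0)
      ∧ ∃ l : ℂ, spectrum ℂ Aᵀ = {l} ∧ spectrum ℂ Dᵀ = {-l} := by
  haveI : NeZero n := ⟨hn.ne'⟩
  refine ⟨fun μ hμ ω hω => anti_of_symProj A D h hμ hω, ?_⟩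
  obtain ⟨l, hl⟩ := spectrum.nonempty_of_isAlgClosed_of_finiteDimensional ℂ Aᵀ
  obtain ⟨ω, hω⟩ := spectrum.nonempty_of_isAlgClosed_of_finiteDimensional ℂ Dᵀ
  refine ⟨l, ?_, ?_⟩
  · ext μ
    simp only [Set.mem_singleton_iff]
    constructor
    · intro hμ
      have h1 := anti_of_symProj A D h hμ hω
      have h2 := anti_of_symProj A D h hl hω
      linear_combination h1 - h2
    · rintro rfl; exact hl
  · ext ω'
    simp only [Set.mem_singleton_iff]
    constructor
    · intro hω'
      have := anti_of_symProj A D h hl hω'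
      linear_combination this
    · rintro rfl
      have := anti_of_symProj A D h hl hω
      have : ω = -l := by linear_combination this
      rwa [this] at hω
end

section
/- Let S be an invertible real 4n×4n matrix written in 2n×2n blocks as S = [[A, B],[C, D]], and suppose A Γ Cᵀ + B Γ Dᵀ = 0 for all symmetric Γ ∈ ℝ^{2n×2n}. If none of A, B, C, D is the zero matrix, then all four blocks A, B, C, D are invertible. -/
open Matrix

private lemma tr_std {m : ℕ} (i j : Fin m) (c : ℝ) :
    (Matrix.single i j c)ᵀ = Matrix.single j i c := by
  ext a b
  simp [Matrix.single, and_comm]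

private lemma entry_mul {m : ℕ} (A C : Matrix (Fin m) (Fin m) ℝ) (i j p q : Fin m) :
    (A * Matrix.single i j (1:ℝ) * Cᵀ) p q = A p i * C q j := by
  rw [Matrix.mul_apply, Finset.sum_eq_single j]
  · simp
  · intro b _ hbj
    rw [Matrix.mul_single_apply_of_ne _ _ _ _ _ hbj]
    simp
  · simp

/-- If `S = [[A,B],[C,D]]` is invertible, `A Γ Cᵀ + B Γ Dᵀ = 0` for all symmetric `Γ`, and
none of the blocks is zero, then all four blocks are invertible. -/
theorem blocks_invertible_of_no_block_zero
    (n : ℕ) (A B C D : Matrix (Fin (2 * n)) (Fin (2 * n)) ℝ)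
    (hS : IsUnit (Matrix.fromBlocks A B C D))
    (hΓ : ∀ Γ : Matrix (Fin (2 * n)) (Fin (2 * n)) ℝ, Γ.IsSymm →
      A * Γ * Cᵀ + B * Γ * Dᵀ = 0)
    (hA : A ≠ 0) (hB : B ≠ 0) (hC : C ≠ 0) (hD : D ≠ 0) :
    IsUnit A ∧ IsUnit B ∧ IsUnit C ∧ IsUnit D := by
  obtain ⟨u, hu⟩ := hS
  set S := Matrix.fromBlocks A B C D with hSdef
  set T : Matrix (Fin (2*n) ⊕ Fin (2*n)) (Fin (2*n) ⊕ Fin (2*n)) ℝ := ↑u⁻¹ with hTdef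
  have hST : S * T = 1 := by rw [← hu, hTdef]; exact u.mul_inv
  have hTS : T * S = 1 := by rw [← hu, hTdef]; exact u.inv_mul
  set P := T.toBlocks₁₁ with hP
  set Q := T.toBlocks₁₂ with hQ
  set R := T.toBlocks₂₁ with hR
  set W := T.toBlocks₂₂ with hW
  have hT : T = Matrix.fromBlocks P Q R W := (Matrix.fromBlocks_toBlocks T).symm
  have hST' : Matrix.fromBlocks (A*P+B*R) (A*Q+B*W) (C*P+D*R) (C*Q+D*W)
      = Matrix.fromBlocks 1 0 0 1 := by
    rw [← Matrix.fromBlocks_multiply, ← hT, hST, Matrix.fromBlocks_one]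
  have hTS' : Matrix.fromBlocks (P*A+Q*C) (P*B+Q*D) (R*A+W*C) (R*B+W*D)
      = Matrix.fromBlocks 1 0 0 1 := by
    rw [← Matrix.fromBlocks_multiply, ← hT, hTS, Matrix.fromBlocks_one]
  rw [Matrix.fromBlocks_inj] at hST' hTS'
  obtain ⟨e1, e2, e3, e4⟩ := hST'
  obtain ⟨f1, f2, f3, f4⟩ := hTS'
  -- basic instance of the hypothesis
  have hI : A * Cᵀ + B * Dᵀ = 0 := by
    have := hΓ 1 Matrix.isSymm_one
    simpa using this
  -- kernel lemma
  have kerBoth : ∀ V₁ V₂ : Matrix (Fin (2*n)) (Fin (2*n)) ℝ,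
      A*V₁ + B*V₂ = 0 → C*V₁ + D*V₂ = 0 → V₁ = 0 ∧ V₂ = 0 := by
    intro V₁ V₂ h1 h2
    constructor
    · calc V₁ = (P*A+Q*C)*V₁ + (P*B+Q*D)*V₂ := by rw [f1, f2]; simp
      _ = P*(A*V₁+B*V₂) + Q*(C*V₁+D*V₂) := by noncomm_ring
      _ = 0 := by rw [h1, h2]; simp
    · calc V₂ = (R*A+W*C)*V₁ + (R*B+W*D)*V₂ := by rw [f3, f4]; simp
      _ = R*(A*V₁+B*V₂) + W*(C*V₁+D*V₂) := by noncomm_ring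
      _ = 0 := by rw [h1, h2]; simp
  have kerM : ∀ V₁ V₂ : Matrix (Fin (2*n)) (Fin (2*n)) ℝ,
      A*V₁ + B*V₂ = 0 →
      V₁ = Q*(C*V₁+D*V₂) ∧ V₂ = W*(C*V₁+D*V₂) := by
    intro V₁ V₂ h1
    constructor
    · calc V₁ = (P*A+Q*C)*V₁ + (P*B+Q*D)*V₂ := by rw [f1, f2]; simp
      _ = P*(A*V₁+B*V₂) + Q*(C*V₁+D*V₂) := by noncomm_ring
      _ = Q*(C*V₁+D*V₂) := by rw [h1]; simp
    · calc V₂ = (R*A+W*C)*V₁ + (R*B+W*D)*V₂ := by rw [f3, f4]; simp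
      _ = R*(A*V₁+B*V₂) + W*(C*V₁+D*V₂) := by noncomm_ring
      _ = W*(C*V₁+D*V₂) := by rw [h1]; simp
  -- CCᵀ + DDᵀ is invertible
  set NN : Matrix (Fin (2*n)) (Fin (2*n)) ℝ := C*Cᵀ + D*Dᵀ with hNN
  have hNNunit : IsUnit NN := by
    rw [Matrix.isUnit_iff_isUnit_det, isUnit_iff_ne_zero]
    intro hdet
    obtain ⟨v, hv, hv0⟩ := (Matrix.exists_mulVec_eq_zero_iff).mpr hdet
    have hdot : (Cᵀ *ᵥ v) ⬝ᵥ (Cᵀ *ᵥ v) + (Dᵀ *ᵥ v) ⬝ᵥ (Dᵀ *ᵥ v) = 0 := by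
      have h0 : v ⬝ᵥ (NN *ᵥ v) = 0 := by rw [hv0]; simp
      have hC' : v ⬝ᵥ ((C*Cᵀ) *ᵥ v) = (Cᵀ *ᵥ v) ⬝ᵥ (Cᵀ *ᵥ v) := by
        rw [← Matrix.mulVec_mulVec, Matrix.dotProduct_mulVec, ← Matrix.mulVec_transpose]
      have hD' : v ⬝ᵥ ((D*Dᵀ) *ᵥ v) = (Dᵀ *ᵥ v) ⬝ᵥ (Dᵀ *ᵥ v) := by
        rw [← Matrix.mulVec_mulVec, Matrix.dotProduct_mulVec, ← Matrix.mulVec_transpose]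
      rw [← hC', ← hD', ← dotProduct_add, ← Matrix.add_mulVec, ← hNN, h0]
    have h1 : (0:ℝ) ≤ (Cᵀ *ᵥ v) ⬝ᵥ (Cᵀ *ᵥ v) :=
      Finset.sum_nonneg fun i _ => mul_self_nonneg _
    have h2 : (0:ℝ) ≤ (Dᵀ *ᵥ v) ⬝ᵥ (Dᵀ *ᵥ v) :=
      Finset.sum_nonneg fun i _ => mul_self_nonneg _
    have hCv : Cᵀ *ᵥ v = 0 := by
      rw [← dotProduct_self_eq_zero (v := Cᵀ *ᵥ v)]
      linarith
    have hDv : Dᵀ *ᵥ v = 0 := by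
      rw [← dotProduct_self_eq_zero (v := Dᵀ *ᵥ v)]
      linarith
    apply hv
    have e4' : Qᵀ * Cᵀ + Wᵀ * Dᵀ = 1 := by
      have := congrArg Matrix.transpose e4
      simpa [Matrix.transpose_add, Matrix.transpose_mul] using this
    calc v = (Qᵀ * Cᵀ + Wᵀ * Dᵀ) *ᵥ v := by rw [e4']; simp
      _ = Qᵀ *ᵥ (Cᵀ *ᵥ v) + Wᵀ *ᵥ (Dᵀ *ᵥ v) := by
          rw [Matrix.add_mulVec, Matrix.mulVec_mulVec, Matrix.mulVec_mulVec]
      _ = 0 := by rw [hCv, hDv]; simp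
  set G : Matrix (Fin (2*n)) (Fin (2*n)) ℝ := NN⁻¹ with hG
  have hNNG : NN * G = 1 := Matrix.mul_nonsing_inv NN ((Matrix.isUnit_iff_isUnit_det NN).mp hNNunit)
  -- Q = CᵀG, W = DᵀG
  have hQW : Q = Cᵀ * G ∧ W = Dᵀ * G := by
    have h1 : A*(Q - Cᵀ*G) + B*(W - Dᵀ*G) = 0 := by
      have : A*Q + B*W - (A*Cᵀ + B*Dᵀ)*G = A*(Q - Cᵀ*G) + B*(W - Dᵀ*G) := by noncomm_ring
      rw [← this, e2, hI]; simp
    have h2 : C*(Q - Cᵀ*G) + D*(W - Dᵀ*G) = 0 := by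
      have : C*Q + D*W - (C*Cᵀ + D*Dᵀ)*G = C*(Q - Cᵀ*G) + D*(W - Dᵀ*G) := by noncomm_ring
      rw [← this, e4, ← hNN, hNNG]; simp
    obtain ⟨z1, z2⟩ := kerBoth _ _ h1 h2
    constructor
    · linear_combination (norm := noncomm_ring) z1
    · linear_combination (norm := noncomm_ring) z2
  obtain ⟨hQeq, hWeq⟩ := hQW
  -- products of two symmetric matrices
  have hprod : ∀ Γ' Γ : Matrix (Fin (2*n)) (Fin (2*n)) ℝ, Γ'.IsSymm → Γ.IsSymm →
      A * (Γ' * Γ) * Cᵀ + B * (Γ' * Γ) * Dᵀ = 0 := by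
    intro Γ' Γ hΓ' hΓΓ
    have h1 : A*(Γ*Cᵀ) + B*(Γ*Dᵀ) = 0 := by
      have := hΓ Γ hΓΓ; rw [Matrix.mul_assoc, Matrix.mul_assoc] at this; exact this
    obtain ⟨k1, k2⟩ := kerM _ _ h1
    set K := C*(Γ*Cᵀ) + D*(Γ*Dᵀ) with hK
    have hmain : A * Γ' * Cᵀ + B * Γ' * Dᵀ = 0 := hΓ Γ' hΓ'
    calc A * (Γ' * Γ) * Cᵀ + B * (Γ' * Γ) * Dᵀ
        = A * Γ' * (Γ * Cᵀ) + B * Γ' * (Γ * Dᵀ) := by noncomm_ring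
      _ = A * Γ' * (Q * K) + B * Γ' * (W * K) := by rw [← k1, ← k2]
      _ = (A * Γ' * Cᵀ + B * Γ' * Dᵀ) * (G * K) := by rw [hQeq, hWeq]; noncomm_ring
      _ = 0 := by rw [hmain]; simp
  -- entrywise identity
  have hE : ∀ p i q j, A p i * C q j + B p i * D q j = 0 := by
    intro p i q j
    have hzero : A * Matrix.single i j (1:ℝ) * Cᵀ + B * Matrix.single i j (1:ℝ) * Dᵀ = 0 := by
      by_cases hij : i = j
      · subst hij
        apply hΓ
        rw [Matrix.IsSymm, tr_std]
      · have hsplit : Matrix.single i j (1:ℝ)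
            = Matrix.single i i (1:ℝ) * (Matrix.single i j (1:ℝ) + Matrix.single j i (1:ℝ)) := by
          rw [mul_add, Matrix.single_mul_single_same, Matrix.single_mul_single_of_ne _ _ _ _ hij]
          simp
        rw [hsplit]
        apply hprod
        · rw [Matrix.IsSymm, tr_std]
        · rw [Matrix.IsSymm, Matrix.transpose_add, tr_std, tr_std, add_comm]
    have := congrFun (congrFun hzero p) q
    simpa [entry_mul] using this
  -- extract nonzero entries
  have hAex : ∃ p i, A p i ≠ 0 := by
    by_contra h; push_neg at h; exact hA (by ext p i; simpa using h p i)
  have hDex : ∃ q j, D q j ≠ 0 := by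
    by_contra h; push_neg at h; exact hD (by ext q j; simpa using h q j)
  obtain ⟨p0, i0, ha⟩ := hAex
  obtain ⟨q0, j0, hd⟩ := hDex
  set μ : ℝ := -(C q0 j0 / D q0 j0) with hμ
  have hBeq : B = μ • A := by
    ext p i
    have h := hE p i q0 j0
    show B p i = μ * A p i
    rw [hμ]
    field_simp
    linear_combination h
  have hCeq : C = (-μ) • D := by
    ext q j
    have h := hE p0 i0 q j
    have hb : B p0 i0 = μ * A p0 i0 := by rw [hBeq]; rfl
    rw [hb] at h
    show C q j = -μ * D q j
    have h2 : A p0 i0 * C q j = A p0 i0 * (-μ * D q j) := by linear_combination h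
    exact mul_left_cancel₀ ha h2
  have hμne : μ ≠ 0 := by
    intro h0
    apply hC
    rw [hCeq, h0]; simp
  -- factorization
  set F : Matrix (Fin (2*n) ⊕ Fin (2*n)) (Fin (2*n) ⊕ Fin (2*n)) ℝ :=
    Matrix.fromBlocks 1 (μ • (1 : Matrix (Fin (2*n)) (Fin (2*n)) ℝ))
      ((-μ) • (1 : Matrix (Fin (2*n)) (Fin (2*n)) ℝ)) 1 with hF
  have hfact : S = Matrix.fromBlocks A 0 0 D * F := by
    rw [hSdef, hF, Matrix.fromBlocks_multiply]
    rw [Matrix.fromBlocks_inj]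
    refine ⟨by simp, ?_, ?_, by simp⟩
    · rw [hBeq]; simp [mul_smul_comm]
    · rw [hCeq]; simp [mul_smul_comm]
  set c : ℝ := (1 + μ^2)⁻¹ with hc
  have hcμ : c * (1 + μ^2) = 1 := by
    rw [hc]; field_simp
  set Finv : Matrix (Fin (2*n) ⊕ Fin (2*n)) (Fin (2*n) ⊕ Fin (2*n)) ℝ :=
    Matrix.fromBlocks (c • 1) ((-(c*μ)) • (1 : Matrix (Fin (2*n)) (Fin (2*n)) ℝ))
      ((c*μ) • (1 : Matrix (Fin (2*n)) (Fin (2*n)) ℝ)) (c • 1) with hFinv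
  have hFFinv : F * Finv = 1 := by
    rw [hF, hFinv, Matrix.fromBlocks_multiply, ← Matrix.fromBlocks_one]
    rw [Matrix.fromBlocks_inj]
    have key : ∀ a b : ℝ, (a • (1 : Matrix (Fin (2*n)) (Fin (2*n)) ℝ)) * (b • 1) = (a*b) • 1 := by
      intro a b
      rw [smul_mul_assoc, mul_smul_comm, smul_smul, mul_one]
    refine ⟨?_, ?_, ?_, ?_⟩
    · rw [one_mul, key, ← add_smul,
        show (c + μ * (c * μ)) = c * (1 + μ^2) by ring, hcμ, one_smul]
    · rw [one_mul, key, ← add_smul,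
        show (-(c*μ) + μ * c) = 0 by ring, zero_smul]
    · rw [key, one_mul, ← add_smul,
        show (-μ * c + c * μ) = 0 by ring, zero_smul]
    · rw [key, one_mul, ← add_smul,
        show (-μ * -(c*μ) + c) = c * (1 + μ^2) by ring, hcμ, one_smul]
  have hFinvF : Finv * F = 1 := mul_eq_one_comm.mp hFFinv
  have hFinvunit : IsUnit Finv := ⟨⟨Finv, F, hFinvF, hFFinv⟩, rfl⟩
  have hSunit : IsUnit S := ⟨u, hu⟩
  have hDdiag : IsUnit (Matrix.fromBlocks A 0 0 D) := by
    have : Matrix.fromBlocks A 0 0 D = S * Finv := by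
      rw [hfact, Matrix.mul_assoc, hFFinv, Matrix.mul_one]
    rw [this]
    exact hSunit.mul hFinvunit
  have hdet : IsUnit (A.det * D.det) := by
    have := (Matrix.isUnit_iff_isUnit_det _).mp hDdiag
    rwa [Matrix.det_fromBlocks_zero₂₁] at this
  have hAunit : IsUnit A := (Matrix.isUnit_iff_isUnit_det A).mpr (isUnit_of_mul_isUnit_left hdet)
  have hDunit : IsUnit D := (Matrix.isUnit_iff_isUnit_det D).mpr (isUnit_of_mul_isUnit_right hdet)
  have hsmul : ∀ (a : ℝ), a ≠ 0 → ∀ (M : Matrix (Fin (2*n)) (Fin (2*n)) ℝ),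
      IsUnit M → IsUnit (a • M) := by
    intro a ha0 M hM
    have h1 : (a • (1 : Matrix (Fin (2*n)) (Fin (2*n)) ℝ)) * (a⁻¹ • 1) = 1 := by
      rw [smul_mul_assoc, mul_smul_comm, smul_smul, mul_inv_cancel₀ ha0, one_smul, mul_one]
    have h1' : (a⁻¹ • (1 : Matrix (Fin (2*n)) (Fin (2*n)) ℝ)) * (a • 1) = 1 :=
      mul_eq_one_comm.mp h1
    have h2 : a • M = (a • (1 : Matrix (Fin (2*n)) (Fin (2*n)) ℝ)) * M := by
      rw [smul_mul_assoc, one_mul]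
    rw [h2]
    exact IsUnit.mul ⟨⟨_, _, h1, h1'⟩, rfl⟩ hM
  refine ⟨hAunit, ?_, ?_, hDunit⟩
  · rw [hBeq]; exact hsmul μ hμne A hAunit
  · rw [hCeq]; exact hsmul (-μ) (neg_ne_zero.mpr hμne) D hDunit
end

section
/- Let S be an invertible real 4n×4n matrix written in 2n×2n blocks as S = [[A, B],[C, D]], and suppose A Γ Cᵀ + B Γ Dᵀ = 0 for all symmetric Γ ∈ ℝ^{2n×2n}. If A = 0, then D = 0 (so S is block anti-diagonal). Analogously, if B = 0 then C = 0; if C = 0 then B = 0; and if D = 0 then A = 0. -/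
open Matrix

lemma aux_left {m : Type*} [Fintype m] [DecidableEq m]
    {B X : Matrix m m ℝ} (hB : IsUnit B) (h : B * X = 0) : X = 0 := by
  obtain ⟨u, rfl⟩ := hB
  have h2 := u.inv_mul_cancel_left X
  rw [h, mul_zero] at h2
  exact h2.symm

lemma aux_right {m : Type*} [Fintype m] [DecidableEq m]
    {B X : Matrix m m ℝ} (hB : IsUnit B) (h : X * B = 0) : X = 0 := by
  obtain ⟨u, rfl⟩ := hB
  have h2 := u.mul_inv_cancel_right X
  rw [h, zero_mul] at h2
  exact h2.symm

/-- If `S = [[A,B],[C,D]]` is invertible and `A Γ Cᵀ + B Γ Dᵀ = 0` for all symmetric `Γ`,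
then `A = 0 → D = 0`, `B = 0 → C = 0`, `C = 0 → B = 0` and `D = 0 → A = 0`. -/
theorem block_zero_implications
    (n : ℕ) (A B C D : Matrix (Fin (2 * n)) (Fin (2 * n)) ℝ)
    (hS : IsUnit (Matrix.fromBlocks A B C D))
    (hΓ : ∀ Γ : Matrix (Fin (2 * n)) (Fin (2 * n)) ℝ, Γ.IsSymm →
      A * Γ * Cᵀ + B * Γ * Dᵀ = 0) :
    (A = 0 → D = 0) ∧ (B = 0 → C = 0) ∧ (C = 0 → B = 0) ∧ (D = 0 → A = 0) := by
  have key := hΓ 1 Matrix.isSymm_one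
  simp only [Matrix.mul_one] at key
  set J : Matrix (Fin (2*n) ⊕ Fin (2*n)) (Fin (2*n) ⊕ Fin (2*n)) ℝ :=
    Matrix.fromBlocks 0 1 1 0 with hJ
  have hJJ : J * J = 1 := by
    simp [hJ, Matrix.fromBlocks_multiply, ← Matrix.fromBlocks_one]
  have hJunit : IsUnit J := ⟨⟨J, J, hJJ, hJJ⟩, rfl⟩
  have hswap : Matrix.fromBlocks A B C D * J = Matrix.fromBlocks B A D C := by
    simp [hJ, Matrix.fromBlocks_multiply]
  refine ⟨?_, ?_, ?_, ?_⟩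
  · intro hA
    subst hA
    have hBu : IsUnit B := by
      have : IsUnit (Matrix.fromBlocks B 0 D C) := by
        rw [← hswap]; exact hS.mul hJunit
      exact (Matrix.isUnit_fromBlocks_zero₁₂.mp this).1
    simp only [Matrix.zero_mul, zero_add] at key
    have : Dᵀ = 0 := aux_left hBu key
    simpa using congrArg Matrix.transpose this
  · intro hB
    subst hB
    have hAu : IsUnit A := (Matrix.isUnit_fromBlocks_zero₁₂.mp hS).1
    simp only [Matrix.zero_mul, add_zero] at key
    have : Cᵀ = 0 := aux_left hAu key
    simpa using congrArg Matrix.transpose this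
  · intro hC
    subst hC
    have hDu : IsUnit D := (Matrix.isUnit_fromBlocks_zero₂₁.mp hS).2
    simp only [Matrix.transpose_zero, Matrix.mul_zero, zero_add] at key
    exact aux_right ((Matrix.isUnit_transpose D).mpr hDu) key
  · intro hD
    subst hD
    have hCu : IsUnit C := by
      have : IsUnit (Matrix.fromBlocks B A 0 C) := by
        rw [← hswap]; exact hS.mul hJunit
      exact (Matrix.isUnit_fromBlocks_zero₂₁.mp this).2
    simp only [Matrix.transpose_zero, Matrix.mul_zero, add_zero] at key
    exact aux_right ((Matrix.isUnit_transpose C).mpr hCu) key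
end

section
/- Let S ∈ GL(4n, ℝ) with blocks S = [[A,B],[C,D]] satisfy A Γ Cᵀ + B Γ Dᵀ = 0 for all symmetric Γ ∈ ℝ^{2n×2n}. Then A X Cᵀ + B X Dᵀ = 0 for all (not necessarily symmetric) X ∈ ℝ^{2n×2n}. -/
open Matrix

/-- If `S = [[A,B],[C,D]]` is invertible and `A Γ Cᵀ + B Γ Dᵀ = 0` for all symmetric `Γ`,
then in fact `A X Cᵀ + B X Dᵀ = 0` for all matrices `X`. -/
theorem condition_extends_to_all_matrices
    (n : ℕ) (A B C D : Matrix (Fin (2 * n)) (Fin (2 * n)) ℝ)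
    (hS : IsUnit (Matrix.fromBlocks A B C D))
    (hΓ : ∀ Γ : Matrix (Fin (2 * n)) (Fin (2 * n)) ℝ, Γ.IsSymm →
      A * Γ * Cᵀ + B * Γ * Dᵀ = 0) :
    ∀ X : Matrix (Fin (2 * n)) (Fin (2 * n)) ℝ, A * X * Cᵀ + B * X * Dᵀ = 0 := by
  classical
  set S : Matrix (Fin (2*n) ⊕ Fin (2*n)) (Fin (2*n) ⊕ Fin (2*n)) ℝ := fromBlocks A B C D
    with hSdef
  -- general block computation of S (X ⊕ X) Sᵀ
  have key : ∀ X : Matrix (Fin (2*n)) (Fin (2*n)) ℝ,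
      S * fromBlocks X 0 0 X * Sᵀ =
      fromBlocks (A*X*Aᵀ + B*X*Bᵀ) (A*X*Cᵀ + B*X*Dᵀ)
                 (C*X*Aᵀ + D*X*Bᵀ) (C*X*Cᵀ + D*X*Dᵀ) := by
    intro X
    simp [hSdef, fromBlocks_transpose, fromBlocks_multiply, Matrix.mul_assoc]
  -- for symmetric Γ the result is block diagonal
  have hsymm : ∀ Γ : Matrix (Fin (2*n)) (Fin (2*n)) ℝ, Γ.IsSymm →
      S * fromBlocks Γ 0 0 Γ * Sᵀ =
      fromBlocks (A*Γ*Aᵀ + B*Γ*Bᵀ) 0 0 (C*Γ*Cᵀ + D*Γ*Dᵀ) := by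
    intro Γ hΓs
    have h2 : C * Γ * Aᵀ + D * Γ * Bᵀ = 0 := by
      have := congrArg Matrix.transpose (hΓ Γ hΓs)
      simpa [Matrix.transpose_add, Matrix.transpose_mul, hΓs.eq, Matrix.mul_assoc] using this
    rw [key, hΓ Γ hΓs, h2]
  -- G = S Sᵀ is invertible and block diagonal
  have hSd : IsUnit S.det := (Matrix.isUnit_iff_isUnit_det S).mp hS
  set G : Matrix (Fin (2*n) ⊕ Fin (2*n)) (Fin (2*n) ⊕ Fin (2*n)) ℝ := S * Sᵀ with hGdef
  have hGd : IsUnit G.det := by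
    rw [hGdef, Matrix.det_mul, Matrix.det_transpose]; exact hSd.mul hSd
  have hGblock : G = fromBlocks (A*Aᵀ + B*Bᵀ) 0 0 (C*Cᵀ + D*Dᵀ) := by
    have h1 := hsymm 1 Matrix.isSymm_one
    simpa using h1
  set E : Matrix (Fin (2*n)) (Fin (2*n)) ℝ := A*Aᵀ + B*Bᵀ with hE
  set F : Matrix (Fin (2*n)) (Fin (2*n)) ℝ := C*Cᵀ + D*Dᵀ with hF
  set H : Matrix (Fin (2*n) ⊕ Fin (2*n)) (Fin (2*n) ⊕ Fin (2*n)) ℝ := G⁻¹ with hHdef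
  have hGinv : G * H = 1 := Matrix.mul_nonsing_inv G hGd
  have hGinv' : H * G = 1 := mul_eq_one_comm.mp hGinv
  obtain ⟨P, Q, R, T, hH⟩ : ∃ P Q R T, H = fromBlocks P Q R T :=
    ⟨H.toBlocks₁₁, H.toBlocks₁₂, H.toBlocks₂₁, H.toBlocks₂₂, (fromBlocks_toBlocks H).symm⟩
  -- block equations for the inverse
  have heq1 : fromBlocks (E*P + 0*R) (E*Q + 0*T) (0*P + F*R) (0*Q + F*T)
      = fromBlocks 1 0 0 1 := by
    rw [← fromBlocks_multiply, ← hGblock, ← hH, fromBlocks_one]; exact hGinv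
  have heq2 : fromBlocks (P*E + Q*0) (P*0 + Q*F) (R*E + T*0) (R*0 + T*F)
      = fromBlocks 1 0 0 1 := by
    rw [← fromBlocks_multiply, ← hGblock, ← hH, fromBlocks_one]; exact hGinv'
  have hEQ : E * Q = 0 := by
    have := congrArg Matrix.toBlocks₁₂ heq1
    simpa [Matrix.toBlocks_fromBlocks₁₂, -fromBlocks_one] using this
  have hFR : F * R = 0 := by
    have := congrArg Matrix.toBlocks₂₁ heq1
    simpa [Matrix.toBlocks_fromBlocks₂₁, -fromBlocks_one] using this
  have hPE : P * E = 1 := by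
    have := congrArg Matrix.toBlocks₁₁ heq2
    rw [Matrix.toBlocks_fromBlocks₁₁, Matrix.toBlocks_fromBlocks₁₁] at this
    simpa using this
  have hTF : T * F = 1 := by
    have := congrArg Matrix.toBlocks₂₂ heq2
    rw [Matrix.toBlocks_fromBlocks₂₂, Matrix.toBlocks_fromBlocks₂₂] at this
    simpa using this
  have hQ : Q = 0 := by
    calc Q = (P * E) * Q := by rw [hPE, Matrix.one_mul]
    _ = P * (E * Q) := by rw [Matrix.mul_assoc]
    _ = 0 := by rw [hEQ, Matrix.mul_zero]
  have hR : R = 0 := by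
    calc R = (T * F) * R := by rw [hTF, Matrix.one_mul]
    _ = T * (F * R) := by rw [Matrix.mul_assoc]
    _ = 0 := by rw [hFR, Matrix.mul_zero]
  have hHblock : H = fromBlocks P 0 0 T := by rw [hH, hQ, hR]
  -- Sᵀ H S = 1
  have hmid : Sᵀ * H * S = 1 := by
    have h : S * (Sᵀ * H) = 1 := by rw [← Matrix.mul_assoc]; exact hGinv
    exact mul_eq_one_comm.mp h
  have assoc_key : ∀ B₁ B₂ : Matrix (Fin (2*n) ⊕ Fin (2*n)) (Fin (2*n) ⊕ Fin (2*n)) ℝ,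
      (S*B₁*Sᵀ) * H * (S*B₂*Sᵀ) = S*(B₁*B₂)*Sᵀ := by
    intro B₁ B₂
    have h' : ∀ M : Matrix (Fin (2*n) ⊕ Fin (2*n)) (Fin (2*n) ⊕ Fin (2*n)) ℝ,
        Sᵀ * (H * (S * M)) = M := fun M => by
      rw [← Matrix.mul_assoc, ← Matrix.mul_assoc, hmid, Matrix.one_mul]
    simp only [Matrix.mul_assoc, h']
  -- the condition holds for products of two symmetric matrices
  have hprod : ∀ Γ₁ Γ₂ : Matrix (Fin (2*n)) (Fin (2*n)) ℝ, Γ₁.IsSymm → Γ₂.IsSymm →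
      A*(Γ₁*Γ₂)*Cᵀ + B*(Γ₁*Γ₂)*Dᵀ = 0 := by
    intro Γ₁ Γ₂ h1s h2s
    have hb : (fromBlocks (Γ₁*Γ₂) 0 0 (Γ₁*Γ₂) :
        Matrix (Fin (2*n) ⊕ Fin (2*n)) (Fin (2*n) ⊕ Fin (2*n)) ℝ)
        = fromBlocks Γ₁ 0 0 Γ₁ * fromBlocks Γ₂ 0 0 Γ₂ := by
      simp [fromBlocks_multiply]
    have e2 : (S * fromBlocks (Γ₁*Γ₂) 0 0 (Γ₁*Γ₂) * Sᵀ).toBlocks₁₂ = 0 := by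
      rw [hb, ← assoc_key, hsymm Γ₁ h1s, hsymm Γ₂ h2s, hHblock]
      simp [fromBlocks_multiply, Matrix.toBlocks_fromBlocks₁₂]
    have hk := congrArg Matrix.toBlocks₁₂ (key (Γ₁*Γ₂))
    rw [Matrix.toBlocks_fromBlocks₁₂] at hk
    rw [← hk]
    exact e2
  -- final decomposition of an arbitrary matrix
  intro X
  set Ebas : Fin (2*n) → Matrix (Fin (2*n)) (Fin (2*n)) ℝ :=
    fun i => Matrix.single i i (1:ℝ) with hEbas
  set Γf : Fin (2*n) → Matrix (Fin (2*n)) (Fin (2*n)) ℝ :=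
    fun i => Ebas i * X + Xᵀ * Ebas i with hΓf
  have hEsymm : ∀ i, (Ebas i).IsSymm := by
    intro i
    ext k l
    simp [hEbas, Matrix.transpose_apply, Matrix.single, and_comm]
  have hΓsymm : ∀ i, (Γf i).IsSymm := by
    intro i
    show (Ebas i * X + Xᵀ * Ebas i)ᵀ = Ebas i * X + Xᵀ * Ebas i
    rw [Matrix.transpose_add, Matrix.transpose_mul, Matrix.transpose_mul,
      (hEsymm i).eq, Matrix.transpose_transpose, add_comm]
  have hdecomp : (∑ i, Ebas i * Γf i) = X + Matrix.diagonal (fun i => X i i) := by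
    ext k l
    simp only [Matrix.sum_apply, Matrix.add_apply, Matrix.mul_apply, hEbas, hΓf,
      Matrix.single, Matrix.of_apply, Matrix.transpose_apply,
      Matrix.diagonal_apply]
    rw [Finset.sum_comm]
    simp [Finset.sum_ite_eq, Finset.mul_sum, mul_ite, ite_and]
  have hX : X = (∑ i, Ebas i * Γf i) - Matrix.diagonal (fun i => X i i) := by
    rw [hdecomp, add_sub_cancel_right]
  have hsum : A*(∑ i, Ebas i * Γf i)*Cᵀ + B*(∑ i, Ebas i * Γf i)*Dᵀ = 0 := by
    rw [Finset.mul_sum, Finset.sum_mul, Finset.mul_sum, Finset.sum_mul,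
      ← Finset.sum_add_distrib]
    exact Finset.sum_eq_zero fun i _ => hprod (Ebas i) (Γf i) (hEsymm i) (hΓsymm i)
  have hdiag : A*(Matrix.diagonal (fun i => X i i))*Cᵀ
      + B*(Matrix.diagonal (fun i => X i i))*Dᵀ = 0 :=
    hΓ _ (Matrix.isSymm_diagonal _)
  calc A*X*Cᵀ + B*X*Dᵀ
      = (A*(∑ i, Ebas i * Γf i)*Cᵀ + B*(∑ i, Ebas i * Γf i)*Dᵀ)
        - (A*(Matrix.diagonal (fun i => X i i))*Cᵀ
           + B*(Matrix.diagonal (fun i => X i i))*Dᵀ) := by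
        conv_lhs => rw [hX]
        noncomm_ring
  _ = 0 := by rw [hsum, hdiag, sub_zero]
end

section
/- Let S ∈ Sp(4n, ℝ) (i.e., S σ Sᵀ = σ with σ the standard symplectic form on ℝ^{4n}) satisfy: for all 2n×2n real covariance matrices Γ₁, Γ₂ (symmetric matrices with Γⱼ + iσ₂ₙ ≥ 0), the matrix S (Γ₁ ⊕ Γ₂) Sᵀ is 2n×2n block diagonal. Then S is either block diagonal, S = [[A,0],[0,D]], or block anti-diagonal, S = [[0,B],[C,0]], with A, B, C, D ∈ Sp(2n, ℝ). -/
open Matrix ComplexOrder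

/-- The standard symplectic form `⊕ᵢ [[0,1],[-1,0]]` on `ℝ^{2m}`. -/
def Jmat (m : ℕ) : Matrix (Fin (2 * m)) (Fin (2 * m)) ℝ :=
  Matrix.of fun i j =>
    if (i : ℕ) + 1 = (j : ℕ) ∧ (i : ℕ) % 2 = 0 then 1
    else if (j : ℕ) + 1 = (i : ℕ) ∧ (j : ℕ) % 2 = 0 then -1 else 0

/-- `S` is a symplectic matrix: `S σ Sᵀ = σ`. -/
def IsSymplectic (m : ℕ) (S : Matrix (Fin (2 * m)) (Fin (2 * m)) ℝ) : Prop :=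
  S * Jmat m * Sᵀ = Jmat m

/-- A covariance matrix: real symmetric `Γ` with `Γ + iσ ≥ 0`. -/
def IsCovMat (n : ℕ) (Γ : Matrix (Fin (2 * n)) (Fin (2 * n)) ℝ) : Prop :=
  Γ.IsSymm ∧
    (Γ.map (Complex.ofReal) + Complex.I • (Jmat n).map (Complex.ofReal)).PosSemidef

/-- The symplectic form on the doubled phase space, in block ordering. -/
def bigJ (n : ℕ) :
    Matrix (Fin (2 * n) ⊕ Fin (2 * n)) (Fin (2 * n) ⊕ Fin (2 * n)) ℝ :=
  Matrix.fromBlocks (Jmat n) 0 0 (Jmat n)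

section Aux

lemma jmat_transpose (m : ℕ) : (Jmat m)ᵀ = -(Jmat m) := by
  ext i j
  simp only [transpose_apply, Jmat, of_apply, Matrix.neg_apply]
  split_ifs <;> (try push_neg at *) <;> (try norm_num) <;>
    (try simp only [true_implies, true_and, not_and] at *) <;> omega

lemma jmat_mul_self (m : ℕ) : Jmat m * Jmat m = -1 := by
  ext i j
  rw [Matrix.mul_apply]
  rcases Nat.even_or_odd (i : ℕ) with hi | hi
  · obtain ⟨r, hr⟩ := hi
    have hlt : (i : ℕ) + 1 < 2 * m := by have := i.isLt; omega
    rw [Finset.sum_eq_single (⟨(i : ℕ) + 1, hlt⟩ : Fin (2 * m))]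
    · simp only [Jmat, of_apply, Matrix.neg_apply, Matrix.one_apply, Fin.ext_iff]
      split_ifs <;> (try push_neg at *) <;> (try norm_num) <;>
        (try simp only [true_implies, true_and, not_and] at *) <;> omega
    · intro b _ hb
      have hbv : (b : ℕ) ≠ (i : ℕ) + 1 := fun hc => hb (Fin.ext hc)
      simp only [Jmat, of_apply]
      split_ifs <;> (try push_neg at *) <;> (try norm_num) <;>
        (try simp only [true_implies, true_and, not_and] at *) <;> omega
    · intro hc; exact absurd (Finset.mem_univ _) hc
  · obtain ⟨r, hr⟩ := hi
    have hlt : (i : ℕ) - 1 < 2 * m := by have := i.isLt; omega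
    rw [Finset.sum_eq_single (⟨(i : ℕ) - 1, hlt⟩ : Fin (2 * m))]
    · simp only [Jmat, of_apply, Matrix.neg_apply, Matrix.one_apply, Fin.ext_iff]
      split_ifs <;> (try push_neg at *) <;> (try norm_num) <;>
        (try simp only [true_implies, true_and, not_and] at *) <;> omega
    · intro b _ hb
      have hbv : (b : ℕ) ≠ (i : ℕ) - 1 := fun hc => hb (Fin.ext hc)
      simp only [Jmat, of_apply]
      split_ifs <;> (try push_neg at *) <;> (try norm_num) <;>
        (try simp only [true_implies, true_and, not_and] at *) <;> omega
    · intro hc; exact absurd (Finset.mem_univ _) hc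

lemma jc_conjTranspose (m : ℕ) :
    ((Jmat m).map Complex.ofReal)ᴴ = -((Jmat m).map Complex.ofReal) := by
  ext i j
  have := congrFun (congrFun (jmat_transpose m) i) j
  simp only [transpose_apply, Matrix.neg_apply] at this
  simp [conjTranspose_apply, Matrix.map_apply, Matrix.neg_apply, this]

lemma jc_mul_self (m : ℕ) :
    ((Jmat m).map Complex.ofReal) * ((Jmat m).map Complex.ofReal) = -1 := by
  ext i j
  have := congrFun (congrFun (jmat_mul_self m) i) j
  simp only [Matrix.mul_apply, Matrix.neg_apply, Matrix.one_apply] at this ⊢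
  simp only [Matrix.map_apply]
  have h2 : (∑ k, ((Jmat m i k : ℂ)) * ((Jmat m k j : ℂ)))
      = ((∑ k, Jmat m i k * Jmat m k j : ℝ) : ℂ) := by
    push_cast; ring
  rw [h2, this]
  split_ifs <;> norm_num

lemma posSemidef_one_add (m : ℕ) :
    (1 + Complex.I • (Jmat m).map Complex.ofReal).PosSemidef := by
  set Jc := (Jmat m).map Complex.ofReal with hJc
  set M := 1 + Complex.I • Jc with hMdef
  have hMH : Mᴴ = M := by
    rw [hMdef, conjTranspose_add, conjTranspose_one, conjTranspose_smul, jc_conjTranspose]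
    simp [Complex.conj_I]
    exact hJc.symm
  have hMM : M * M = (2 : ℂ) • M := by
    rw [hMdef]
    rw [add_mul, mul_add, mul_add, one_mul, mul_one, smul_mul_smul_comm, jc_mul_self,
      Complex.I_mul_I]
    rw [neg_smul_neg, one_smul, one_mul, two_smul]
    abel
  have key : M = ((((Real.sqrt 2)⁻¹ : ℝ) : ℂ) • M)ᴴ * ((((Real.sqrt 2)⁻¹ : ℝ) : ℂ) • M) := by
    rw [conjTranspose_smul, hMH, smul_mul_assoc, mul_smul_comm, hMM]
    rw [smul_smul, smul_smul]
    have hr : ((Real.sqrt 2)⁻¹ : ℝ) * ((Real.sqrt 2)⁻¹) * 2 = 1 := by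
      rw [← mul_inv, Real.mul_self_sqrt (by norm_num : (0:ℝ) ≤ 2)]
      norm_num
    have h2 : (star ((((Real.sqrt 2)⁻¹ : ℝ)) : ℂ) * ((((Real.sqrt 2)⁻¹ : ℝ)) : ℂ) * 2)
        = (1 : ℂ) := by
      rw [Complex.star_def, Complex.conj_ofReal]
      exact_mod_cast hr
    rw [h2, one_smul]
  rw [key]
  exact posSemidef_conjTranspose_mul_self _

lemma isCovMat_one (n : ℕ) : IsCovMat n 1 := by
  refine ⟨Matrix.isSymm_one, ?_⟩
  have : (1 : Matrix (Fin (2*n)) (Fin (2*n)) ℝ).map Complex.ofReal = 1 := by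
    simp [Matrix.map_one]
  rw [this]
  exact posSemidef_one_add n

lemma isCovMat_one_add (n : ℕ) (v : Fin (2*n) → ℝ) :
    IsCovMat n (1 + vecMulVec v v) := by
  constructor
  · unfold Matrix.IsSymm
    rw [transpose_add, transpose_one]
    congr 1
    ext i j
    simp [vecMulVec_apply, transpose_apply, mul_comm]
  · have hmap : (1 + vecMulVec v v).map Complex.ofReal
        = 1 + vecMulVec (fun i => (v i : ℂ)) (fun i => (v i : ℂ)) := by
      ext i j
      simp [Matrix.map_apply, Matrix.add_apply, Matrix.one_apply, vecMulVec_apply]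
      split_ifs <;> push_cast <;> ring
    rw [hmap]
    have : (1 : Matrix (Fin (2*n)) (Fin (2*n)) ℂ)
        + vecMulVec (fun i => (v i : ℂ)) (fun i => (v i : ℂ))
        + Complex.I • (Jmat n).map Complex.ofReal
        = (1 + Complex.I • (Jmat n).map Complex.ofReal)
          + vecMulVec (fun i => (v i : ℂ)) (fun i => (v i : ℂ)) := by abel
    rw [this]
    refine (posSemidef_one_add n).add ?_
    have : vecMulVec (fun i => (v i : ℂ)) (fun i => (v i : ℂ))
        = Matrix.replicateCol (Fin 1) (fun i => (v i : ℂ)) * (Matrix.replicateCol (Fin 1) (fun i => (v i : ℂ)))ᴴ := by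
      ext i j
      simp [vecMulVec_apply, Matrix.mul_apply, Matrix.replicateCol_apply, conjTranspose_apply,
        Complex.conj_ofReal, Fin.sum_univ_succ]
    rw [this]
    exact posSemidef_self_mul_conjTranspose _

variable {N : Type*} [Fintype N] [DecidableEq N]

lemma mul_vecMulVec_mul (A C : Matrix N N ℝ) (v : N → ℝ) :
    A * vecMulVec v v * Cᵀ = vecMulVec (A *ᵥ v) (C *ᵥ v) := by
  have h1 : A * vecMulVec v v = vecMulVec (A *ᵥ v) v := by
    ext i k
    simp only [Matrix.mul_apply, vecMulVec_apply, Matrix.mulVec, dotProduct,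
      Finset.sum_mul, mul_assoc]
  have h2 : vecMulVec (A *ᵥ v) v * Cᵀ = vecMulVec (A *ᵥ v) (C *ᵥ v) := by
    ext i j
    simp only [Matrix.mul_apply, vecMulVec_apply, Matrix.mulVec, dotProduct,
      transpose_apply, Finset.mul_sum]
    exact Finset.sum_congr rfl fun k _ => by ring
  rw [h1, h2]

lemma vecMulVec_zero_or (u w : N → ℝ) (h : vecMulVec u w = 0) : u = 0 ∨ w = 0 := by
  by_cases hu : u = 0
  · exact Or.inl hu
  · right
    obtain ⟨i, hi⟩ := Function.ne_iff.mp hu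
    funext j
    have := congrFun (congrFun h i) j
    simp only [vecMulVec_apply, Matrix.zero_apply] at this
    have := mul_eq_zero.mp this
    simp only [Pi.zero_apply] at hi ⊢
    tauto

lemma matrix_zero_or (A C : Matrix N N ℝ) (h : ∀ v, A *ᵥ v = 0 ∨ C *ᵥ v = 0) :
    A = 0 ∨ C = 0 := by
  have key : ∀ (M : Matrix N N ℝ), M ≠ 0 → ∃ v, M *ᵥ v ≠ 0 := by
    intro M hM
    by_contra hc
    push_neg at hc
    apply hM
    ext i j
    have := congrFun (hc (Pi.single j 1)) i
    simpa using this
  by_contra hc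
  push_neg at hc
  obtain ⟨u, hu⟩ := key A hc.1
  obtain ⟨w, hw⟩ := key C hc.2
  have hCu : C *ᵥ u = 0 := (h u).resolve_left hu
  have hAw : A *ᵥ w = 0 := (h w).resolve_right hw
  rcases h (u + w) with h1 | h1
  · rw [mulVec_add, hAw, add_zero] at h1; exact hu h1
  · rw [mulVec_add, hCu, zero_add] at h1; exact hw h1

end Aux

/-- If a symplectic `S` maps every block-diagonal pair `Γ₁ ⊕ Γ₂` of covariance matrices to a
block-diagonal matrix, then `S` is block diagonal or block anti-diagonal with symplectic
blocks. -/
theorem symplectic_preserving_block_diagonal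
    (n : ℕ) (hn : 0 < n)
    (S : Matrix (Fin (2 * n) ⊕ Fin (2 * n)) (Fin (2 * n) ⊕ Fin (2 * n)) ℝ)
    (hS : S * bigJ n * Sᵀ = bigJ n)
    (h : ∀ Γ₁ Γ₂ : Matrix (Fin (2 * n)) (Fin (2 * n)) ℝ, IsCovMat n Γ₁ → IsCovMat n Γ₂ →
      (S * Matrix.fromBlocks Γ₁ 0 0 Γ₂ * Sᵀ).toBlocks₁₂ = 0 ∧
      (S * Matrix.fromBlocks Γ₁ 0 0 Γ₂ * Sᵀ).toBlocks₂₁ = 0) :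
    (∃ A D, IsSymplectic n A ∧ IsSymplectic n D ∧ S = Matrix.fromBlocks A 0 0 D) ∨
    (∃ B C, IsSymplectic n B ∧ IsSymplectic n C ∧ S = Matrix.fromBlocks 0 B C 0) := by
  obtain ⟨A, B, C, D, rfl⟩ :
      ∃ A B C D, S = Matrix.fromBlocks A B C D :=
    ⟨S.toBlocks₁₁, S.toBlocks₁₂, S.toBlocks₂₁, S.toBlocks₂₂, (fromBlocks_toBlocks S).symm⟩
  have hblock : ∀ Γ₁ Γ₂, IsCovMat n Γ₁ → IsCovMat n Γ₂ →
      A * Γ₁ * Cᵀ + B * Γ₂ * Dᵀ = 0 := by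
    intro Γ₁ Γ₂ h1 h2
    have := (h Γ₁ Γ₂ h1 h2).1
    rw [fromBlocks_transpose, fromBlocks_multiply, fromBlocks_multiply] at this
    simpa using this
  have hbase := hblock 1 1 (isCovMat_one n) (isCovMat_one n)
  have hACv : ∀ v, A *ᵥ v = 0 ∨ C *ᵥ v = 0 := by
    intro v
    have h1 := hblock (1 + vecMulVec v v) 1 (isCovMat_one_add n v) (isCovMat_one n)
    have h3 : A * vecMulVec v v * Cᵀ = 0 := by
      have e : A * (1 + vecMulVec v v) * Cᵀ + B * 1 * Dᵀ - (A * 1 * Cᵀ + B * 1 * Dᵀ)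
          = A * vecMulVec v v * Cᵀ := by
        rw [mul_add, add_mul]; abel
      rw [← e, h1, hbase, sub_zero]
    rw [mul_vecMulVec_mul] at h3
    exact vecMulVec_zero_or _ _ h3
  have hBDv : ∀ v, B *ᵥ v = 0 ∨ D *ᵥ v = 0 := by
    intro v
    have h1 := hblock 1 (1 + vecMulVec v v) (isCovMat_one n) (isCovMat_one_add n v)
    have h3 : B * vecMulVec v v * Dᵀ = 0 := by
      have e : A * 1 * Cᵀ + B * (1 + vecMulVec v v) * Dᵀ - (A * 1 * Cᵀ + B * 1 * Dᵀ)
          = B * vecMulVec v v * Dᵀ := by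
        rw [mul_add, add_mul]; abel
      rw [← e, h1, hbase, sub_zero]
    rw [mul_vecMulVec_mul] at h3
    exact vecMulVec_zero_or _ _ h3
  unfold bigJ at hS
  rw [fromBlocks_transpose, fromBlocks_multiply, fromBlocks_multiply] at hS
  have e11 := congrArg Matrix.toBlocks₁₁ hS
  have e22 := congrArg Matrix.toBlocks₂₂ hS
  simp only [Matrix.toBlocks_fromBlocks₁₁, Matrix.toBlocks_fromBlocks₂₂, Matrix.mul_zero,
    Matrix.zero_mul, add_zero, zero_add] at e11 e22
  have hJne : Jmat n ≠ 0 := by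
    intro hJ
    have h0 : (0:ℕ) < 2*n := by omega
    have h1 : (1:ℕ) < 2*n := by omega
    have := congrFun (congrFun hJ ⟨0, h0⟩) ⟨1, h1⟩
    simp [Jmat] at this
  rcases matrix_zero_or A C hACv with hA | hC
  · rcases matrix_zero_or B D hBDv with hB | hD
    · exfalso
      apply hJne
      rw [hA, hB] at e11
      simpa using e11.symm
    · right
      refine ⟨B, C, ?_, ?_, ?_⟩
      · rw [hA] at e11
        unfold IsSymplectic
        simpa using e11
      · rw [hD] at e22
        unfold IsSymplectic
        simpa using e22
      · rw [hA, hD]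
  · rcases matrix_zero_or B D hBDv with hB | hD
    · left
      refine ⟨A, D, ?_, ?_, ?_⟩
      · rw [hB] at e11
        unfold IsSymplectic
        simpa using e11
      · rw [hC] at e22
        unfold IsSymplectic
        simpa using e22
      · rw [hB, hC]
    · exfalso
      apply hJne
      rw [hC, hD] at e22
      simpa using e22.symm
end

section
/- Classical Darmois–Skitovich (functional equation form, n = 2, equal coefficients): let φ₁, φ₂: ℝ → ℂ be characteristic functions of real random variables with finite second moments, and fix θ with θ ≠ mπ/2 for all integers m. If for all s, t ∈ ℝ, φ₁(cos θ · t + sin θ · s) φ₂(cos θ · s − sin θ · t) = φ₁(cos θ · t) φ₁(sin θ · s) φ₂(cos θ · s) φ₂(−sin θ · t), then φ₁ and φ₂ are Gaussian characteristic functions with the same variance: φⱼ(t) = exp(−v t²/2 + i t dⱼ) for some v ≥ 0 and real d₁, d₂. -/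
open MeasureTheory Complex

lemma DS_coe_hasDeriv (t : ℝ) : HasDerivAt (fun t : ℝ => (t : ℂ)) 1 t := by
  simpa using (hasDerivAt_id t).ofReal_comp

lemma DS_exp_hasDeriv (x t : ℝ) : HasDerivAt (fun t : ℝ => Complex.exp (Complex.I * t * x))
    (Complex.I * x * Complex.exp (Complex.I * t * x)) t := by
  have h1 : HasDerivAt (fun t : ℝ => Complex.I * (t : ℂ) * x) (Complex.I * x) t := by
    simpa using ((DS_coe_hasDeriv t).const_mul Complex.I).mul_const (x : ℂ)
  simpa [mul_comm] using h1.cexp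

lemma DS_char_props {Ω : Type*} [MeasureSpace Ω] [IsProbabilityMeasure (volume : Measure Ω)]
    (X : Ω → ℝ) (hX : MemLp X 2) (φ : ℝ → ℂ)
    (hφ : ∀ t : ℝ, φ t = ∫ ω, Complex.exp (Complex.I * t * X ω)) :
    φ 0 = 1 ∧
    (∀ t : ℝ, HasDerivAt φ (∫ ω, Complex.I * X ω * Complex.exp (Complex.I * (t:ℝ) * X ω)) t) ∧
    Continuous (fun t : ℝ => ∫ ω, Complex.I * X ω * Complex.exp (Complex.I * (t:ℝ) * X ω)) ∧
    (∫ ω, Complex.I * X ω * Complex.exp (Complex.I * ((0:ℝ):ℂ) * X ω)) = Complex.I * ((∫ ω, X ω : ℝ) : ℂ) ∧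
    (∀ t : ℝ, ‖φ t‖ ≤ 1) ∧
    (∀ t : ℝ, φ (-t) = (starRingEnd ℂ) (φ t)) := by
  have hXm : AEStronglyMeasurable X volume := hX.aestronglyMeasurable
  have hXi : Integrable X volume := hX.integrable one_le_two
  have hFmeas : ∀ t : ℝ, AEStronglyMeasurable (fun ω => Complex.exp (Complex.I * t * X ω)) volume := by
    intro t
    have hc : Continuous fun x : ℝ => Complex.exp (Complex.I * t * x) := by fun_prop
    exact hc.comp_aestronglyMeasurable hXm
  have hnorm : ∀ (t : ℝ) (ω : Ω), ‖Complex.exp (Complex.I * t * X ω)‖ = 1 := by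
    intro t ω; simp [Complex.norm_exp]
  have hFint : ∀ t : ℝ, Integrable (fun ω => Complex.exp (Complex.I * t * X ω)) volume := by
    intro t
    exact (integrable_const (1:ℝ)).mono' (hFmeas t) (ae_of_all _ fun ω => le_of_eq (hnorm t ω))
  have hF'meas : ∀ t : ℝ, AEStronglyMeasurable
      (fun ω => Complex.I * X ω * Complex.exp (Complex.I * t * X ω)) volume := by
    intro t
    exact ((Complex.continuous_ofReal.comp_aestronglyMeasurable hXm).const_mul Complex.I).mul (hFmeas t)
  have hnorm' : ∀ (t : ℝ) (ω : Ω), ‖Complex.I * X ω * Complex.exp (Complex.I * t * X ω)‖ = ‖X ω‖ := by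
    intro t ω
    simp [hnorm t ω, Complex.norm_exp, abs_nonneg]
  have hderiv : ∀ t : ℝ, HasDerivAt φ (∫ ω, Complex.I * X ω * Complex.exp (Complex.I * (t:ℝ) * X ω)) t := by
    intro t₀
    have H := hasDerivAt_integral_of_dominated_loc_of_deriv_le (μ := (volume : Measure Ω))
        (𝕜 := ℝ)
        (F := fun (t : ℝ) ω => Complex.exp (Complex.I * t * X ω))
        (F' := fun (t : ℝ) ω => Complex.I * X ω * Complex.exp (Complex.I * t * X ω))
        (x₀ := t₀) (bound := fun ω => ‖X ω‖) (Metric.ball_mem_nhds t₀ one_pos)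
        (Filter.Eventually.of_forall fun t => hFmeas t) (hFint t₀) (hF'meas t₀)
        (ae_of_all _ fun ω t _ => le_of_eq (hnorm' t ω))
        hXi.norm
        (ae_of_all _ fun ω t _ => DS_exp_hasDeriv (X ω) t)
    have heq : φ = fun t : ℝ => ∫ ω, Complex.exp (Complex.I * t * X ω) := funext hφ
    rw [heq]
    exact H.2
  refine ⟨?_, hderiv, ?_, ?_, ?_, ?_⟩
  · rw [hφ 0]; simp
  · apply continuous_of_dominated hF'meas
      (fun t => ae_of_all _ fun ω => le_of_eq (hnorm' t ω)) hXi.norm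
    exact ae_of_all _ fun ω => by fun_prop
  · simp only [Complex.ofReal_zero, mul_zero, zero_mul, Complex.exp_zero, mul_one]
    rw [integral_const_mul]
    congr 1
    exact integral_ofReal
  · intro t
    rw [hφ t]
    have := norm_integral_le_of_norm_le_const (μ := (volume : Measure Ω))
      (f := fun ω => Complex.exp (Complex.I * t * X ω)) (C := 1)
      (ae_of_all _ fun ω => le_of_eq (hnorm t ω))
    simpa using this
  · intro t
    rw [hφ t, hφ (-t), ← integral_conj]
    congr 1
    funext ω
    rw [← Complex.exp_conj]
    simp [map_mul]

lemma DS_additive (w : ℝ → ℂ) (hw : ∀ x y, w (x + y) = w x + w y) (hc : Continuous w) :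
    ∀ x : ℝ, w x = x * w 1 := by
  intro x
  let wa : ℝ →+ ℂ := AddMonoidHom.mk' w hw
  have := (wa.toRealLinearMap hc).map_smul x 1
  rw [smul_eq_mul, mul_one, Complex.real_smul] at this
  exact this

lemma DS_nonvanish (a b : ℝ) (ha : a ≠ 0) (hb : b ≠ 0) (hab : a ^ 2 + b ^ 2 = 1)
    (φ₁ φ₂ : ℝ → ℂ) (hc1 : Continuous φ₁) (hc2 : Continuous φ₂)
    (h10 : φ₁ 0 = 1) (h20 : φ₂ 0 = 1)
    (id1 : ∀ r : ℝ, φ₁ r = φ₁ (a ^ 2 * r) * φ₁ (b ^ 2 * r) * (φ₂ (a * b * r) * φ₂ (-(a * b * r))))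
    (id2 : ∀ r : ℝ, φ₂ r = φ₁ (a * b * r) * φ₁ (-(a * b * r)) * (φ₂ (a ^ 2 * r) * φ₂ (b ^ 2 * r))) :
    ∀ x : ℝ, φ₁ x ≠ 0 ∧ φ₂ x ≠ 0 := by
  set c : ℝ := max (a ^ 2) (b ^ 2) with hc
  have hc0 : 0 < c := lt_max_of_lt_left (by positivity)
  have ha2 : 0 < a ^ 2 := by positivity
  have hb2 : 0 < b ^ 2 := by positivity
  have hc1' : c < 1 := max_lt (by nlinarith) (by nlinarith)
  have habc : |a * b| ≤ c := by
    nlinarith [abs_nonneg (a * b), _root_.sq_abs (a * b), le_max_left (a ^ 2) (b ^ 2),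
      le_max_right (a ^ 2) (b ^ 2), sq_nonneg (|a * b| - c), hc0.le]
  -- find δ > 0 where both are nonzero
  have e1 : ∀ᶠ y in nhds (0:ℝ), φ₁ y ≠ 0 :=
    (hc1.continuousAt (x := (0:ℝ))).eventually_ne (by rw [h10]; exact one_ne_zero)
  have e2 : ∀ᶠ y in nhds (0:ℝ), φ₂ y ≠ 0 :=
    (hc2.continuousAt (x := (0:ℝ))).eventually_ne (by rw [h20]; exact one_ne_zero)
  obtain ⟨ε₁, hε₁, h1⟩ := Metric.eventually_nhds_iff.mp e1
  obtain ⟨ε₂, hε₂, h2⟩ := Metric.eventually_nhds_iff.mp e2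
  set δ : ℝ := min ε₁ ε₂ / 2 with hδ
  have hδ0 : 0 < δ := by positivity
  have hbase : ∀ x : ℝ, |x| ≤ δ → φ₁ x ≠ 0 ∧ φ₂ x ≠ 0 := by
    intro x hx
    have hd : dist x 0 < min ε₁ ε₂ := by
      rw [Real.dist_eq, sub_zero]
      calc |x| ≤ δ := hx
        _ < min ε₁ ε₂ := by rw [hδ]; linarith [lt_min hε₁ hε₂]
    exact ⟨h1 (lt_of_lt_of_le hd (min_le_left _ _)), h2 (lt_of_lt_of_le hd (min_le_right _ _))⟩
  have hstep : ∀ n : ℕ, ∀ x : ℝ, |x| ≤ δ / c ^ n → φ₁ x ≠ 0 ∧ φ₂ x ≠ 0 := by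
    intro n
    induction n with
    | zero => simpa using hbase
    | succ n ih =>
      intro x hx
      have key : ∀ y : ℝ, |y| ≤ c * |x| → φ₁ y ≠ 0 ∧ φ₂ y ≠ 0 := by
        intro y hy
        apply ih
        calc |y| ≤ c * |x| := hy
          _ ≤ c * (δ / c ^ (n+1)) := by
              exact mul_le_mul_of_nonneg_left hx hc0.le
          _ = δ / c ^ n := by field_simp; ring
      have k1 : |a ^ 2 * x| ≤ c * |x| := by
        rw [abs_mul, _root_.abs_of_nonneg (sq_nonneg a)]
        exact mul_le_mul_of_nonneg_right (le_max_left _ _) (abs_nonneg x)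
      have k2 : |b ^ 2 * x| ≤ c * |x| := by
        rw [abs_mul, _root_.abs_of_nonneg (sq_nonneg b)]
        exact mul_le_mul_of_nonneg_right (le_max_right _ _) (abs_nonneg x)
      have k3 : |a * b * x| ≤ c * |x| := by
        rw [abs_mul]
        exact mul_le_mul_of_nonneg_right habc (abs_nonneg x)
      have k4 : |(-(a * b * x))| ≤ c * |x| := by rwa [abs_neg]
      constructor
      · rw [id1 x]
        exact mul_ne_zero (mul_ne_zero (key _ k1).1 (key _ k2).1)
          (mul_ne_zero (key _ k3).2 (key _ k4).2)
      · rw [id2 x]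
        exact mul_ne_zero (mul_ne_zero (key _ k3).1 (key _ k4).1)
          (mul_ne_zero (key _ k1).2 (key _ k2).2)
  intro x
  obtain ⟨n, hn⟩ := exists_pow_lt_of_lt_one (show (0:ℝ) < δ / (|x| + 1) by positivity) hc1'
  apply hstep n
  rw [le_div_iff₀ (by positivity)]
  rw [lt_div_iff₀ (by positivity)] at hn
  nlinarith [abs_nonneg x, pow_pos hc0 n]

lemma DS_comp {φ D : ℝ → ℂ} (hD : ∀ t : ℝ, HasDerivAt φ (D t) t) {f : ℝ → ℝ} {f' t : ℝ}
    (hf : HasDerivAt f f' t) : HasDerivAt (fun x => φ (f x)) (D (f t) * f') t := by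
  have := HasDerivAt.scomp (𝕜 := ℝ) t (hD (f t)) hf
  simpa [smul_eq_mul, mul_comm, Function.comp_def] using this

/-- Classical Darmois–Skitovich theorem in functional-equation form (two variables, beam
splitter coefficients): if the characteristic functions of two random variables with finite
second moments satisfy the factorization identity for a nontrivial angle `θ`, then both are
Gaussian characteristic functions with the same variance. -/
theorem classical_DS_functional_equation
    {Ω : Type*} [MeasureSpace Ω] [IsProbabilityMeasure (volume : Measure Ω)]
    (X₁ X₂ : Ω → ℝ) (hX₁ : MemLp X₁ 2) (hX₂ : MemLp X₂ 2)
    (θ : ℝ) (hθ : ∀ m : ℤ, θ ≠ m * (Real.pi / 2))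
    (φ₁ φ₂ : ℝ → ℂ)
    (hφ₁ : ∀ t : ℝ, φ₁ t = ∫ ω, Complex.exp (Complex.I * t * X₁ ω))
    (hφ₂ : ∀ t : ℝ, φ₂ t = ∫ ω, Complex.exp (Complex.I * t * X₂ ω))
    (hfe : ∀ s t : ℝ,
      φ₁ (Real.cos θ * t + Real.sin θ * s) * φ₂ (Real.cos θ * s - Real.sin θ * t) =
        φ₁ (Real.cos θ * t) * φ₁ (Real.sin θ * s) *
        φ₂ (Real.cos θ * s) * φ₂ (-(Real.sin θ * t))) :
    ∃ v : ℝ, 0 ≤ v ∧ ∃ d₁ d₂ : ℝ,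
      (∀ t : ℝ, φ₁ t = Complex.exp ((- (v * t ^ 2) / 2 : ℝ) + Complex.I * t * d₁)) ∧
      (∀ t : ℝ, φ₂ t = Complex.exp ((- (v * t ^ 2) / 2 : ℝ) + Complex.I * t * d₂)) := by
  obtain ⟨h10, hD1, hD1c, hD10, hbd1, hcj1⟩ := DS_char_props X₁ hX₁ φ₁ hφ₁
  obtain ⟨h20, hD2, hD2c, hD20, hbd2, hcj2⟩ := DS_char_props X₂ hX₂ φ₂ hφ₂
  set a : ℝ := Real.cos θ with ha_def
  set b : ℝ := Real.sin θ with hb_def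
  have ha : a ≠ 0 := by
    intro h
    obtain ⟨k, hk⟩ := Real.cos_eq_zero_iff.mp h
    exact hθ (2*k+1) (by rw [hk]; push_cast; ring)
  have hb : b ≠ 0 := by
    intro h
    obtain ⟨n, hn⟩ := Real.sin_eq_zero_iff.mp h
    exact hθ (2*n) (by rw [← hn]; push_cast; ring)
  have hab : a ^ 2 + b ^ 2 = 1 := Real.cos_sq_add_sin_sq θ
  have habC : (a : ℂ) ^ 2 + (b : ℂ) ^ 2 = 1 := by exact_mod_cast hab
  -- derivative functions
  set D₁ : ℝ → ℂ := fun t : ℝ => ∫ ω, Complex.I * X₁ ω * Complex.exp (Complex.I * (t:ℝ) * X₁ ω)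
    with hD₁def
  set D₂ : ℝ → ℂ := fun t : ℝ => ∫ ω, Complex.I * X₂ ω * Complex.exp (Complex.I * (t:ℝ) * X₂ ω)
    with hD₂def
  have hD1' : ∀ t : ℝ, HasDerivAt φ₁ (D₁ t) t := hD1
  have hD2' : ∀ t : ℝ, HasDerivAt φ₂ (D₂ t) t := hD2
  have hD1c' : Continuous D₁ := hD1c
  have hD2c' : Continuous D₂ := hD2c
  have hφ₁c : Continuous φ₁ := by
    have : Differentiable ℝ φ₁ := fun t => (hD1' t).differentiableAt
    exact this.continuous
  have hφ₂c : Continuous φ₂ := by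
    have : Differentiable ℝ φ₂ := fun t => (hD2' t).differentiableAt
    exact this.continuous
  -- self-similar identities
  have id1 : ∀ r : ℝ, φ₁ r = φ₁ (a ^ 2 * r) * φ₁ (b ^ 2 * r) * (φ₂ (a * b * r) * φ₂ (-(a * b * r))) := by
    intro r
    have h := hfe (b*r) (a*r)
    rw [show a*(a*r)+b*(b*r) = r from by linear_combination r*hab,
        show a*(b*r) - b*(a*r) = 0 from by ring,
        show a*(a*r) = a^2*r from by ring,
        show b*(b*r) = b^2*r from by ring,
        show a*(b*r) = a*b*r from by ring,
        show -(b*(a*r)) = -(a*b*r) from by ring, h20, mul_one] at h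
    linear_combination h
  have id2 : ∀ r : ℝ, φ₂ r = φ₁ (a * b * r) * φ₁ (-(a * b * r)) * (φ₂ (a ^ 2 * r) * φ₂ (b ^ 2 * r)) := by
    intro r
    have h := hfe (a*r) (-(b*r))
    rw [show a*(-(b*r))+b*(a*r) = 0 from by ring,
        show a*(a*r) - b*(-(b*r)) = r from by linear_combination r*hab,
        show a*(-(b*r)) = -(a*b*r) from by ring,
        show b*(a*r) = a*b*r from by ring,
        show a*(a*r) = a^2*r from by ring,
        show -(b*(-(b*r))) = b^2*r from by ring, h10, one_mul] at h
    linear_combination h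
  have hnv : ∀ x : ℝ, φ₁ x ≠ 0 ∧ φ₂ x ≠ 0 :=
    DS_nonvanish a b ha hb hab φ₁ φ₂ hφ₁c hφ₂c h10 h20 id1 id2
  -- logarithmic derivatives
  set u₁ : ℝ → ℂ := fun t => D₁ t / φ₁ t with hu₁def
  set u₂ : ℝ → ℂ := fun t => D₂ t / φ₂ t with hu₂def
  have hu₁c : Continuous u₁ := hD1c'.div hφ₁c fun t => (hnv t).1
  have hu₂c : Continuous u₂ := hD2c'.div hφ₂c fun t => (hnv t).2
  -- functional equations for log derivatives
  have eqI : ∀ s t : ℝ, (a:ℂ) * u₁ (a*t+b*s) - (b:ℂ) * u₂ (a*s-b*t)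
      = (a:ℂ) * u₁ (a*t) - (b:ℂ) * u₂ (-(b*t)) := by
    intro s t
    have h1 : HasDerivAt (fun x : ℝ => a*x+b*s) a t := by
      simpa using ((hasDerivAt_id t).const_mul a).add_const (b*s)
    have h2 : HasDerivAt (fun x : ℝ => a*s-b*x) (-b) t := by
      simpa using ((hasDerivAt_id t).const_mul b).const_sub (a*s)
    have h3 : HasDerivAt (fun x : ℝ => a*x) a t := by
      simpa using (hasDerivAt_id t).const_mul a
    have h4 : HasDerivAt (fun x : ℝ => -(b*x)) (-b) t := by
      simpa using ((hasDerivAt_id t).const_mul b).fun_neg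
    have hA : HasDerivAt (fun x : ℝ => φ₁ (a*x+b*s) * φ₂ (a*s-b*x))
        (D₁ (a*t+b*s) * ((a:ℝ):ℂ) * φ₂ (a*s-b*t) + φ₁ (a*t+b*s) * (D₂ (a*s-b*t) * ((-b:ℝ):ℂ))) t := by
      exact (DS_comp hD1' h1).mul (DS_comp hD2' h2)
    have hB : HasDerivAt (fun x : ℝ => φ₁ (a*x) * φ₁ (b*s) * φ₂ (a*s) * φ₂ (-(b*x)))
        ((D₁ (a*t) * ((a:ℝ):ℂ) * φ₁ (b*s) * φ₂ (a*s)) * φ₂ (-(b*t))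
          + (φ₁ (a*t) * φ₁ (b*s) * φ₂ (a*s)) * (D₂ (-(b*t)) * ((-b:ℝ):ℂ))) t := by
      exact (((DS_comp hD1' h3).mul_const (φ₁ (b*s))).mul_const (φ₂ (a*s))).mul
        (DS_comp hD2' h4)
    have hfun : (fun x : ℝ => φ₁ (a*x) * φ₁ (b*s) * φ₂ (a*s) * φ₂ (-(b*x)))
        = (fun x : ℝ => φ₁ (a*x+b*s) * φ₂ (a*s-b*x)) := funext fun x => (hfe s x).symm
    rw [hfun] at hB
    have deq := hA.unique hB
    have n1 : φ₁ (a*t+b*s) ≠ 0 := (hnv _).1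
    have n2 : φ₂ (a*s-b*t) ≠ 0 := (hnv _).2
    have n3 : φ₁ (a*t) ≠ 0 := (hnv _).1
    have n4 : φ₂ (-(b*t)) ≠ 0 := (hnv _).2
    have n5 : φ₁ (b*s) ≠ 0 := (hnv _).1
    have n6 : φ₂ (a*s) ≠ 0 := (hnv _).2
    have hne : φ₁ (a*t+b*s) * φ₂ (a*s-b*t) ≠ 0 := mul_ne_zero n1 n2
    apply mul_right_cancel₀ hne
    push_cast at deq
    have e1 : ((a:ℂ) * u₁ (a*t+b*s) - (b:ℂ) * u₂ (a*s-b*t)) * (φ₁ (a*t+b*s) * φ₂ (a*s-b*t))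
        = D₁ (a*t+b*s) * (a:ℂ) * φ₂ (a*s-b*t) + φ₁ (a*t+b*s) * (D₂ (a*s-b*t) * (-(b:ℂ))) := by
      rw [hu₁def, hu₂def]
      simp only [div_eq_mul_inv]
      linear_combination ((a:ℂ) * D₁ (a*t+b*s) * φ₂ (a*s-b*t)) * mul_inv_cancel₀ n1
        - ((b:ℂ) * D₂ (a*s-b*t) * φ₁ (a*t+b*s)) * mul_inv_cancel₀ n2
    have e2 : ((a:ℂ) * u₁ (a*t) - (b:ℂ) * u₂ (-(b*t))) * (φ₁ (a*t+b*s) * φ₂ (a*s-b*t))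
        = (D₁ (a*t) * (a:ℂ) * φ₁ (b*s) * φ₂ (a*s)) * φ₂ (-(b*t))
          + (φ₁ (a*t) * φ₁ (b*s) * φ₂ (a*s)) * (D₂ (-(b*t)) * (-(b:ℂ))) := by
      rw [hfe s t, hu₁def, hu₂def]
      simp only [div_eq_mul_inv]
      linear_combination ((a:ℂ) * D₁ (a*t) * φ₁ (b*s) * φ₂ (a*s) * φ₂ (-(b*t))) * mul_inv_cancel₀ n3
        - ((b:ℂ) * D₂ (-(b*t)) * φ₁ (a*t) * φ₁ (b*s) * φ₂ (a*s)) * mul_inv_cancel₀ n4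
    rw [e1, e2]
    linear_combination deq
  have eqII : ∀ s t : ℝ, (b:ℂ) * u₁ (a*t+b*s) + (a:ℂ) * u₂ (a*s-b*t)
      = (b:ℂ) * u₁ (b*s) + (a:ℂ) * u₂ (a*s) := by
    intro s t
    have h1 : HasDerivAt (fun x : ℝ => a*t+b*x) b s := by
      simpa using ((hasDerivAt_id s).const_mul b).const_add (a*t)
    have h2 : HasDerivAt (fun x : ℝ => a*x-b*t) a s := by
      simpa using ((hasDerivAt_id s).const_mul a).sub_const (b*t)
    have h3 : HasDerivAt (fun x : ℝ => b*x) b s := by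
      simpa using (hasDerivAt_id s).const_mul b
    have h4 : HasDerivAt (fun x : ℝ => a*x) a s := by
      simpa using (hasDerivAt_id s).const_mul a
    have hA : HasDerivAt (fun x : ℝ => φ₁ (a*t+b*x) * φ₂ (a*x-b*t))
        (D₁ (a*t+b*s) * ((b:ℝ):ℂ) * φ₂ (a*s-b*t) + φ₁ (a*t+b*s) * (D₂ (a*s-b*t) * ((a:ℝ):ℂ))) s := by
      exact (DS_comp hD1' h1).mul (DS_comp hD2' h2)
    have hB : HasDerivAt (fun x : ℝ => φ₁ (a*t) * φ₁ (b*x) * φ₂ (a*x) * φ₂ (-(b*t)))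
        (((φ₁ (a*t) * (D₁ (b*s) * ((b:ℝ):ℂ))) * φ₂ (a*s)
            + (φ₁ (a*t) * φ₁ (b*s)) * (D₂ (a*s) * ((a:ℝ):ℂ)))
          * φ₂ (-(b*t))) s := by
      exact (((DS_comp hD1' h3).const_mul (φ₁ (a*t))).mul
        (DS_comp hD2' h4)).mul_const (φ₂ (-(b*t)))
    have hfun : (fun x : ℝ => φ₁ (a*t) * φ₁ (b*x) * φ₂ (a*x) * φ₂ (-(b*t)))
        = (fun x : ℝ => φ₁ (a*t+b*x) * φ₂ (a*x-b*t)) := funext fun x => (hfe x t).symm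
    rw [hfun] at hB
    have deq := hA.unique hB
    have n1 : φ₁ (a*t+b*s) ≠ 0 := (hnv _).1
    have n2 : φ₂ (a*s-b*t) ≠ 0 := (hnv _).2
    have n3 : φ₁ (a*t) ≠ 0 := (hnv _).1
    have n4 : φ₂ (-(b*t)) ≠ 0 := (hnv _).2
    have n5 : φ₁ (b*s) ≠ 0 := (hnv _).1
    have n6 : φ₂ (a*s) ≠ 0 := (hnv _).2
    have hne : φ₁ (a*t+b*s) * φ₂ (a*s-b*t) ≠ 0 := mul_ne_zero n1 n2
    apply mul_right_cancel₀ hne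
    push_cast at deq
    have e1 : ((b:ℂ) * u₁ (a*t+b*s) + (a:ℂ) * u₂ (a*s-b*t)) * (φ₁ (a*t+b*s) * φ₂ (a*s-b*t))
        = D₁ (a*t+b*s) * (b:ℂ) * φ₂ (a*s-b*t) + φ₁ (a*t+b*s) * (D₂ (a*s-b*t) * (a:ℂ)) := by
      rw [hu₁def, hu₂def]
      simp only [div_eq_mul_inv]
      linear_combination ((b:ℂ) * D₁ (a*t+b*s) * φ₂ (a*s-b*t)) * mul_inv_cancel₀ n1
        + ((a:ℂ) * D₂ (a*s-b*t) * φ₁ (a*t+b*s)) * mul_inv_cancel₀ n2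
    have e2 : ((b:ℂ) * u₁ (b*s) + (a:ℂ) * u₂ (a*s)) * (φ₁ (a*t+b*s) * φ₂ (a*s-b*t))
        = ((φ₁ (a*t) * (D₁ (b*s) * (b:ℂ))) * φ₂ (a*s)
            + (φ₁ (a*t) * φ₁ (b*s)) * (D₂ (a*s) * (a:ℂ)))
          * φ₂ (-(b*t)) := by
      rw [hfe s t, hu₁def, hu₂def]
      simp only [div_eq_mul_inv]
      linear_combination ((b:ℂ) * D₁ (b*s) * φ₁ (a*t) * φ₂ (a*s) * φ₂ (-(b*t))) * mul_inv_cancel₀ n5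
        + ((a:ℂ) * D₂ (a*s) * φ₁ (a*t) * φ₁ (b*s) * φ₂ (-(b*t))) * mul_inv_cancel₀ n6
    rw [e1, e2]
    linear_combination deq
  -- Pexider for u₁
  have comb1 : ∀ s t : ℝ, u₁ (a*t+b*s)
      = ((a:ℂ)^2 * u₁ (a*t) - (a:ℂ)*(b:ℂ) * u₂ (-(b*t)))
        + ((b:ℂ)^2 * u₁ (b*s) + (a:ℂ)*(b:ℂ) * u₂ (a*s)) := by
    intro s t
    have i1 := eqI s t
    have i2 := eqII s t
    linear_combination (a:ℂ)*i1 + (b:ℂ)*i2 - u₁ (a*t+b*s) * habC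
  have comb2 : ∀ s t : ℝ, u₂ (a*s-b*t)
      = ((-(a:ℂ)*(b:ℂ)) * u₁ (a*t) + (b:ℂ)^2 * u₂ (-(b*t)))
        + ((a:ℂ)*(b:ℂ) * u₁ (b*s) + (a:ℂ)^2 * u₂ (a*s)) := by
    intro s t
    have i1 := eqI s t
    have i2 := eqII s t
    linear_combination (-(b:ℂ))*i1 + (a:ℂ)*i2 - u₂ (a*s-b*t) * habC
  have add1 : ∀ x y : ℝ, u₁ (x + y)
      = ((a:ℂ)^2 * u₁ x - (a:ℂ)*(b:ℂ) * u₂ (-(b*(x/a))))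
        + ((b:ℂ)^2 * u₁ (b*(y/b)) + (a:ℂ)*(b:ℂ) * u₂ (a*(y/b))) := by
    intro x y
    have h := comb1 (y/b) (x/a)
    rw [show a*(x/a) = x from by field_simp] at h
    rw [show b*(y/b) = y from by field_simp] at h
    rw [show b*(y/b) = y from by field_simp]
    exact h
  have add2 : ∀ x y : ℝ, u₂ (x + y)
      = ((-(a:ℂ)*(b:ℂ)) * u₁ (a*(-(y/b))) + (b:ℂ)^2 * u₂ y)
        + ((a:ℂ)*(b:ℂ) * u₁ (b*(x/a)) + (a:ℂ)^2 * u₂ x) := by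
    intro x y
    have h := comb2 (x/a) (-(y/b))
    rw [show a*(x/a) = x from by field_simp] at h
    rw [show (b:ℝ)*(-(y/b)) = -y from by field_simp] at h
    rw [show x - -y = x + y from by ring, neg_neg] at h
    exact h
  -- u₁, u₂ are affine
  have aff : ∀ (u : ℝ → ℂ), Continuous u →
      (∃ F G : ℝ → ℂ, ∀ x y : ℝ, u (x + y) = F x + G y) →
      ∀ x : ℝ, u x = u 0 + x * (u 1 - u 0) := by
    intro u hc ⟨F, G, hFG⟩ x
    have hadd : ∀ x y : ℝ, u (x + y) - u 0 = (u x - u 0) + (u y - u 0) := by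
      intro x y
      have h1 := hFG x y
      have h2 := hFG x 0
      have h3 := hFG 0 y
      have h4 := hFG 0 0
      rw [add_zero] at h2
      rw [zero_add] at h3
      rw [add_zero] at h4
      linear_combination h1 - h2 - h3 + h4
    have := DS_additive (fun x => u x - u 0) hadd (hc.sub continuous_const) x
    linear_combination this
  have hu₁aff : ∀ x : ℝ, u₁ x = u₁ 0 + x * (u₁ 1 - u₁ 0) := by
    apply aff u₁ hu₁c
    exact ⟨fun x => (a:ℂ)^2 * u₁ x - (a:ℂ)*(b:ℂ) * u₂ (-(b*(x/a))),
      fun y => (b:ℂ)^2 * u₁ (b*(y/b)) + (a:ℂ)*(b:ℂ) * u₂ (a*(y/b)), add1⟩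
  have hu₂aff : ∀ x : ℝ, u₂ x = u₂ 0 + x * (u₂ 1 - u₂ 0) := by
    apply aff u₂ hu₂c
    refine ⟨fun x => (a:ℂ)*(b:ℂ) * u₁ (b*(x/a)) + (a:ℂ)^2 * u₂ x,
      fun y => (-(a:ℂ)*(b:ℂ)) * u₁ (a*(-(y/b))) + (b:ℂ)^2 * u₂ y, fun x y => ?_⟩
    rw [add2 x y]
    ring
  set c₁ : ℂ := u₁ 1 - u₁ 0 with hc₁def
  set c₂ : ℂ := u₂ 1 - u₂ 0 with hc₂def
  set m₁ : ℂ := u₁ 0 with hm₁def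
  set m₂ : ℂ := u₂ 0 with hm₂def
  -- equal slopes
  have hcc : c₁ = c₂ := by
    have e := eqI 1 0
    rw [show a*(0:ℝ)+b*1 = b from by ring, show a*(1:ℝ)-b*0 = a from by ring,
        show a*(0:ℝ) = 0 from by ring, show -(b*(0:ℝ)) = 0 from by ring] at e
    have hb' := hu₁aff b
    have ha' := hu₂aff a
    have key : (a:ℂ)*(b:ℂ)*c₁ = (a:ℂ)*(b:ℂ)*c₂ := by
      linear_combination e - (a:ℂ)*hb' + (b:ℂ)*ha'
    exact mul_left_cancel₀ (mul_ne_zero (Complex.ofReal_ne_zero.mpr ha)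
      (Complex.ofReal_ne_zero.mpr hb)) key
  -- solve the ODE φ' = (m + c t) φ
  have hDu1 : ∀ t : ℝ, D₁ t = (m₁ + t * c₁) * φ₁ t := by
    intro t
    have h := hu₁aff t
    rw [hu₁def] at h
    field_simp [(hnv t).1] at h
    linear_combination h
  have hDu2 : ∀ t : ℝ, D₂ t = (m₂ + t * c₂) * φ₂ t := by
    intro t
    have h := hu₂aff t
    rw [hu₂def] at h
    field_simp [(hnv t).2] at h
    linear_combination h
  have solve : ∀ (φ D : ℝ → ℂ) (m c : ℂ), (∀ t : ℝ, HasDerivAt φ (D t) t) →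
      φ 0 = 1 → (∀ t : ℝ, D t = (m + t * c) * φ t) →
      ∀ t : ℝ, φ t = Complex.exp (c * (t^2/2 : ℝ) + m * t) := by
    intro φ D m c hD h0 hDu t
    have hq : ∀ t : ℝ, HasDerivAt (fun t : ℝ => c * ((t^2/2 : ℝ) : ℂ) + m * t) (c * t + m) t := by
      intro t
      have hpow : HasDerivAt (fun t : ℝ => t^2/2) t t := by
        simpa using (hasDerivAt_pow 2 t).div_const 2
      have hpowC : HasDerivAt (fun t : ℝ => ((t^2/2 : ℝ) : ℂ)) (t:ℂ) t := by
        have h := HasDerivAt.scomp (𝕜 := ℝ) t (DS_coe_hasDeriv (t^2/2)) hpow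
        simpa only [Function.comp_def, Complex.real_smul, Complex.ofReal_one, mul_one,
          smul_eq_mul] using h
      have := (hpowC.const_mul c).fun_add ((DS_coe_hasDeriv t).const_mul m)
      simpa using this
    have hzero : ∀ t : ℝ, HasDerivAt
        (fun t : ℝ => φ t * Complex.exp (-(c * ((t^2/2 : ℝ) : ℂ) + m * t))) 0 t := by
      intro t
      have hexp : HasDerivAt (fun t : ℝ => Complex.exp (-(c * ((t^2/2 : ℝ) : ℂ) + m * t)))
          (Complex.exp (-(c * ((t^2/2 : ℝ) : ℂ) + m * t)) * (-(c * t + m))) t :=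
        ((hq t).neg).cexp
      have h := (hD t).mul hexp
      have hval : D t * Complex.exp (-(c * ((t^2/2 : ℝ) : ℂ) + m * t))
          + φ t * (Complex.exp (-(c * ((t^2/2 : ℝ) : ℂ) + m * t)) * (-(c * t + m))) = 0 := by
        rw [hDu t]; ring
      rw [hval] at h
      exact h
    have hconst :
        φ t * Complex.exp (-(c * ((t^2/2 : ℝ) : ℂ) + m * t))
          = φ 0 * Complex.exp (-(c * (((0:ℝ)^2/2 : ℝ) : ℂ) + m * ((0:ℝ):ℂ))) :=
      is_const_of_deriv_eq_zero
        (f := fun t : ℝ => φ t * Complex.exp (-(c * ((t^2/2 : ℝ) : ℂ) + m * t)))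
        (fun t => (hzero t).differentiableAt) (fun t => (hzero t).deriv) t 0
    have hE0 : Complex.exp (-(c * (((0:ℝ)^2/2 : ℝ) : ℂ) + m * ((0:ℝ):ℂ))) = 1 := by
      norm_num
    rw [h0, hE0, one_mul] at hconst
    have hEinv : Complex.exp (-(c * ((t^2/2 : ℝ) : ℂ) + m * t))
        * Complex.exp (c * ((t^2/2 : ℝ) : ℂ) + m * t) = 1 := by
      rw [← Complex.exp_add, neg_add_cancel, Complex.exp_zero]
    calc φ t = φ t * (Complex.exp (-(c * ((t^2/2 : ℝ) : ℂ) + m * t))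
          * Complex.exp (c * ((t^2/2 : ℝ) : ℂ) + m * t)) := by rw [hEinv, mul_one]
      _ = (φ t * Complex.exp (-(c * ((t^2/2 : ℝ) : ℂ) + m * t)))
          * Complex.exp (c * ((t^2/2 : ℝ) : ℂ) + m * t) := by ring
      _ = Complex.exp (c * ((t^2/2 : ℝ) : ℂ) + m * t) := by rw [hconst, one_mul]
  have hform1 : ∀ t : ℝ, φ₁ t = Complex.exp (c₁ * (t^2/2 : ℝ) + m₁ * t) :=
    solve φ₁ D₁ m₁ c₁ hD1' h10 hDu1
  have hform2 : ∀ t : ℝ, φ₂ t = Complex.exp (c₁ * (t^2/2 : ℝ) + m₂ * t) := by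
    rw [hcc]
    exact solve φ₂ D₂ m₂ c₂ hD2' h20 hDu2
  -- m₁, m₂ are purely imaginary
  set d₁ : ℝ := ∫ ω, X₁ ω with hd₁def
  set d₂ : ℝ := ∫ ω, X₂ ω with hd₂def
  have hm₁ : m₁ = Complex.I * d₁ := by
    rw [hm₁def, hu₁def]
    simp only [h10, div_one]
    exact hD10
  have hm₂ : m₂ = Complex.I * d₂ := by
    rw [hm₂def, hu₂def]
    simp only [h20, div_one]
    exact hD20
  -- c₁ is real and nonpositive
  have hIm : c₁.im = 0 := by
    by_contra hne
    set t : ℝ := Real.sqrt (Real.pi / |c₁.im|) with ht_def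
    have hpos : 0 < Real.pi / |c₁.im| := div_pos Real.pi_pos (abs_pos.mpr hne)
    have ht2 : t^2 = Real.pi / |c₁.im| := Real.sq_sqrt hpos.le
    have h := hcj1 t
    rw [hform1 (-t), hform1 t, ← Complex.exp_conj] at h
    have hconjarg : (starRingEnd ℂ) (c₁ * ((t^2/2 : ℝ) : ℂ) + m₁ * t)
        = (starRingEnd ℂ) c₁ * ((t^2/2 : ℝ) : ℂ) + (-m₁) * t := by
      rw [hm₁]
      simp only [map_add, map_mul, Complex.conj_ofReal, Complex.conj_I]
      ring
    rw [hconjarg] at h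
    have hdiv : Complex.exp ((c₁ * (((-t)^2/2 : ℝ) : ℂ) + m₁ * ((-t : ℝ) : ℂ))
        - ((starRingEnd ℂ) c₁ * ((t^2/2 : ℝ) : ℂ) + (-m₁) * ((t : ℝ) : ℂ))) = 1 := by
      rw [Complex.exp_sub, h, div_self (Complex.exp_ne_zero _)]
    have harg : (c₁ * (((-t)^2/2 : ℝ) : ℂ) + m₁ * ((-t : ℝ) : ℂ))
        - ((starRingEnd ℂ) c₁ * ((t^2/2 : ℝ) : ℂ) + (-m₁) * ((t : ℝ) : ℂ))
        = ((c₁.im * t^2 : ℝ) : ℂ) * Complex.I := by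
      have hsc : c₁ - (starRingEnd ℂ) c₁ = (2 * c₁.im : ℝ) * Complex.I := Complex.sub_conj c₁
      push_cast
      push_cast at hsc
      linear_combination ((t:ℂ)^2/2) * hsc
    rw [harg] at hdiv
    obtain ⟨n, hn⟩ := Complex.exp_eq_one_iff.mp hdiv
    have hI : ((c₁.im * t^2 : ℝ) : ℂ) = (n : ℂ) * (2 * Real.pi) := by
      have hn' : ((c₁.im * t^2 : ℝ) : ℂ) * Complex.I
          = ((n : ℂ) * (2 * Real.pi)) * Complex.I := by rw [hn]; ring
      exact mul_right_cancel₀ Complex.I_ne_zero hn'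
    have hR : c₁.im * t^2 = n * (2 * Real.pi) := by exact_mod_cast hI
    rw [ht2] at hR
    have habs : |c₁.im| * (Real.pi / |c₁.im|) = Real.pi := by
      field_simp
    have habs2 : |(n : ℝ)| * (2 * Real.pi) = Real.pi := by
      have h1 : |c₁.im * (Real.pi / |c₁.im|)| = |(n : ℝ) * (2 * Real.pi)| := by rw [hR]
      rw [abs_mul, abs_mul, abs_of_pos hpos, habs,
        abs_of_pos (by positivity : (0:ℝ) < 2 * Real.pi)] at h1
      linarith
    rcases eq_or_ne n 0 with h0' | h0'
    · rw [h0'] at habs2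
      norm_num at habs2
      exact absurd habs2 (Ne.symm Real.pi_ne_zero)
    · have : (1:ℝ) ≤ |(n:ℝ)| := by
        exact_mod_cast Int.one_le_abs (by exact_mod_cast h0')
      nlinarith [Real.pi_pos]
  have hRe : c₁.re ≤ 0 := by
    have h := hbd1 1
    rw [hform1 1] at h
    rw [Complex.norm_exp] at h
    have hre : (c₁ * (((1:ℝ)^2/2 : ℝ) : ℂ) + m₁ * (1:ℝ)).re = c₁.re / 2 := by
      rw [hm₁]
      simp [Complex.add_re, Complex.mul_re]
      ring
    rw [hre] at h
    have := Real.exp_le_one_iff.mp h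
    linarith
  -- conclude
  obtain ⟨vr, hvr, hvr0⟩ : ∃ vr : ℝ, c₁ = (vr : ℂ) ∧ vr ≤ 0 :=
    ⟨c₁.re, Complex.ext rfl (by simp [hIm]), hRe⟩
  refine ⟨-vr, by linarith, d₁, d₂, ?_, ?_⟩
  · intro t
    rw [hform1 t, hm₁, hvr]
    congr 1
    push_cast
    ring
  · intro t
    rw [hform2 t, hm₂, hvr]
    congr 1
    push_cast
    ring
end
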